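/- arXiv:1205.3306 — 10 statements merged into one kernel-verified Lean document; each statement's English description precedes it below -/
import Mathlib

section
/- Let I ⊆ ℝ be an open interval, μ ∈ ℝ, and let R, Λ, Θ, U : I → ℝ be C¹ functions with R > 0, R² = U² − μ², (R')² + (R²/(R² + μ²))·(Λ')² = 1, and Θ' = (μ/(R² + μ²))·Λ' on I. Define the helicoidal patch X : I × ℝ → ℝ³ by X(s,t) = (R(s)·cos(t − Θ(s)), R(s)·sin(t − Θ(s)), Λ(s) + μ·(t − Θ(s))). Then for every (s,t) ∈ I × ℝ the first fundamental form coefficients satisfy E(s,t) = 1, F(s,t) = 0, and G(s,t) = U(s)². -/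
open Real

noncomputable section

/-- Euclidean dot product on `ℝ³ = ℝ × ℝ × ℝ`. -/
def dot3 (v w : ℝ × ℝ × ℝ) : ℝ := v.1 * w.1 + v.2.1 * w.2.1 + v.2.2 * w.2.2

/-- Cross product on `ℝ³ = ℝ × ℝ × ℝ`. -/
def cross3 (v w : ℝ × ℝ × ℝ) : ℝ × ℝ × ℝ :=
  (v.2.1 * w.2.2 - v.2.2 * w.2.1,
   v.2.2 * w.1 - v.1 * w.2.2,
   v.1 * w.2.1 - v.2.1 * w.1)

/-- The vertical unit vector `e₃ = (0,0,1)`. -/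
def e3 : ℝ × ℝ × ℝ := ((0 : ℝ), (0 : ℝ), (1 : ℝ))

/-- Partial derivative of a parametrized surface w.r.t. the first parameter. -/
def pd1 (X : ℝ → ℝ → ℝ × ℝ × ℝ) (s t : ℝ) : ℝ × ℝ × ℝ := deriv (fun u => X u t) s

/-- Partial derivative of a parametrized surface w.r.t. the second parameter. -/
def pd2 (X : ℝ → ℝ → ℝ × ℝ × ℝ) (s t : ℝ) : ℝ × ℝ × ℝ := deriv (fun v => X s v) t

/-- Unit normal `n = (X_s × X_t)/‖X_s × X_t‖`. -/
def unitNormal (X : ℝ → ℝ → ℝ × ℝ × ℝ) (s t : ℝ) : ℝ × ℝ × ℝ :=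
  (Real.sqrt (dot3 (cross3 (pd1 X s t) (pd2 X s t)) (cross3 (pd1 X s t) (pd2 X s t))))⁻¹ •
    cross3 (pd1 X s t) (pd2 X s t)

/-- Angle function `n₃ = n · e₃`. -/
def angleFun (X : ℝ → ℝ → ℝ × ℝ × ℝ) (s t : ℝ) : ℝ := dot3 (unitNormal X s t) e3

/-- Gaussian curvature `K = ((X_ss·n)(X_tt·n) − (X_st·n)²)/(EG − F²)`. -/
def gauss (X : ℝ → ℝ → ℝ × ℝ × ℝ) (s t : ℝ) : ℝ :=
  (dot3 (pd1 (pd1 X) s t) (unitNormal X s t) * dot3 (pd2 (pd2 X) s t) (unitNormal X s t)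
      - (dot3 (pd2 (pd1 X) s t) (unitNormal X s t)) ^ 2)
    / (dot3 (pd1 X s t) (pd1 X s t) * dot3 (pd2 X s t) (pd2 X s t)
        - (dot3 (pd1 X s t) (pd2 X s t)) ^ 2)

/-- For Bour's helicoidal patch with pitch `μ`, the first fundamental
form coefficients are `E = 1`, `F = 0`, `G = U²`. -/
theorem bour_first_fundamental_form
    (I : Set ℝ) (hIopen : IsOpen I) (hIconn : I.OrdConnected) (μ : ℝ)
    (R Λ Θ U : ℝ → ℝ)
    (hRC : ContDiffOn ℝ 1 R I) (hΛC : ContDiffOn ℝ 1 Λ I)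
    (hΘC : ContDiffOn ℝ 1 Θ I) (hUC : ContDiffOn ℝ 1 U I)
    (hRpos : ∀ s ∈ I, 0 < R s)
    (hRU : ∀ s ∈ I, (R s) ^ 2 = (U s) ^ 2 - μ ^ 2)
    (hmetric : ∀ s ∈ I,
      (deriv R s) ^ 2 + ((R s) ^ 2 / ((R s) ^ 2 + μ ^ 2)) * (deriv Λ s) ^ 2 = 1)
    (hΘ' : ∀ s ∈ I, deriv Θ s = (μ / ((R s) ^ 2 + μ ^ 2)) * deriv Λ s)
    (X : ℝ → ℝ → ℝ × ℝ × ℝ)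
    (hX : ∀ s t, X s t =
      (R s * Real.cos (t - Θ s), R s * Real.sin (t - Θ s), Λ s + μ * (t - Θ s))) :
    ∀ s ∈ I, ∀ t : ℝ,
      dot3 (pd1 X s t) (pd1 X s t) = 1 ∧
      dot3 (pd1 X s t) (pd2 X s t) = 0 ∧
      dot3 (pd2 X s t) (pd2 X s t) = (U s) ^ 2 := by
  intro s hs t
  have hmem := hIopen.mem_nhds hs
  have hRd : HasDerivAt R (deriv R s) s :=
    ((hRC.contDiffAt hmem).differentiableAt one_ne_zero).hasDerivAt
  have hΛd : HasDerivAt Λ (deriv Λ s) s :=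
    ((hΛC.contDiffAt hmem).differentiableAt one_ne_zero).hasDerivAt
  have hΘd : HasDerivAt Θ (deriv Θ s) s :=
    ((hΘC.contDiffAt hmem).differentiableAt one_ne_zero).hasDerivAt
  have hsub : HasDerivAt (fun u => t - Θ u) (-(deriv Θ s)) s := hΘd.const_sub t
  have h1 := hRd.mul hsub.cos
  have h2 := hRd.mul hsub.sin
  have h3 := hΛd.add (hsub.const_mul μ)
  have hXs : pd1 X s t =
      (deriv R s * Real.cos (t - Θ s) + R s * (-Real.sin (t - Θ s) * -(deriv Θ s)),
       deriv R s * Real.sin (t - Θ s) + R s * (Real.cos (t - Θ s) * -(deriv Θ s)),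
       deriv Λ s + μ * -(deriv Θ s)) := by
    unfold pd1
    have he : (fun u => X u t) = fun u =>
        (R u * Real.cos (t - Θ u), R u * Real.sin (t - Θ u), Λ u + μ * (t - Θ u)) :=
      funext fun u => hX u t
    rw [he]; exact (h1.prodMk (h2.prodMk h3)).deriv
  have hv : HasDerivAt (fun v => v - Θ s) 1 t := (hasDerivAt_id t).sub_const _
  have g1 := hv.cos.const_mul (R s)
  have g2 := hv.sin.const_mul (R s)
  have g3 := (hasDerivAt_const t (Λ s)).add (hv.const_mul μ)
  have hXt : pd2 X s t =
      (R s * (-Real.sin (t - Θ s) * 1), R s * (Real.cos (t - Θ s) * 1), 0 + μ * 1) := by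
    unfold pd2
    have he : (fun v => X s v) = fun v =>
        (R s * Real.cos (v - Θ s), R s * Real.sin (v - Θ s), Λ s + μ * (v - Θ s)) :=
      funext fun v => hX s v
    rw [he]; exact (g1.prodMk (g2.prodMk g3)).deriv
  have hcs : Real.sin (t - Θ s) ^ 2 + Real.cos (t - Θ s) ^ 2 = 1 :=
    Real.sin_sq_add_cos_sq _
  have hRp := hRpos s hs
  have hd : (R s) ^ 2 + μ ^ 2 ≠ 0 := by positivity
  have hθm : ((R s) ^ 2 + μ ^ 2) * deriv Θ s = μ * deriv Λ s := by
    rw [hΘ' s hs]; field_simp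
  have hmm : (deriv R s) ^ 2 * ((R s) ^ 2 + μ ^ 2) + (R s) ^ 2 * (deriv Λ s) ^ 2
      = (R s) ^ 2 + μ ^ 2 := by
    have h := hmetric s hs
    field_simp at h
    linarith [h]
  refine ⟨?_, ?_, ?_⟩
  · have key : ((R s) ^ 2 + μ ^ 2) * (dot3 (pd1 X s t) (pd1 X s t) - 1) = 0 := by
      rw [hXs]; unfold dot3; dsimp only
      linear_combination (((R s) ^ 2 + μ ^ 2) * ((deriv R s) ^ 2 + (R s) ^ 2 * (deriv Θ s) ^ 2)) * hcs + hmm +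
        ((((R s) ^ 2 + μ ^ 2) * deriv Θ s - μ * deriv Λ s) * hθm)
    rcases mul_eq_zero.mp key with h | h
    · exact absurd h hd
    · linarith
  · rw [hXs, hXt]; unfold dot3; dsimp only
    linear_combination (-(R s) ^ 2 * deriv Θ s) * hcs - hθm
  · rw [hXt]; unfold dot3; dsimp only
    linear_combination (R s) ^ 2 * hcs + hRU s hs
end
end

section
/- Let I ⊆ ℝ be an open interval, μ ∈ ℝ, and let R, Λ, Θ, U : I → ℝ be C¹ functions with R > 0, R² = U² − μ², (R')² + (R²/(R² + μ²))·(Λ')² = 1, and Θ' = (μ/(R² + μ²))·Λ' on I. Define X(s,t) = (R(s)·cos(t − Θ(s)), R(s)·sin(t − Θ(s)), Λ(s) + μ·(t − Θ(s))). Then for every (s,t) ∈ I × ℝ one has ((X_s × X_t)·e₃)² = U(s)²·U'(s)² and ‖X_s × X_t‖² = U(s)²; in particular the squared angle function satisfies n₃² = (U')². -/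
open Real

noncomputable section

/-- For Bour's helicoidal patch, `((X_s × X_t)·e₃)² = U²·(U')²` and
`‖X_s × X_t‖² = U²`; in particular the squared angle function satisfies `n₃² = (U')²`. -/
theorem bour_angle_function
    (I : Set ℝ) (hIopen : IsOpen I) (hIconn : I.OrdConnected) (μ : ℝ)
    (R Λ Θ U : ℝ → ℝ)
    (hRC : ContDiffOn ℝ 1 R I) (hΛC : ContDiffOn ℝ 1 Λ I)
    (hΘC : ContDiffOn ℝ 1 Θ I) (hUC : ContDiffOn ℝ 1 U I)
    (hRpos : ∀ s ∈ I, 0 < R s)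
    (hRU : ∀ s ∈ I, (R s) ^ 2 = (U s) ^ 2 - μ ^ 2)
    (hmetric : ∀ s ∈ I,
      (deriv R s) ^ 2 + ((R s) ^ 2 / ((R s) ^ 2 + μ ^ 2)) * (deriv Λ s) ^ 2 = 1)
    (hΘ' : ∀ s ∈ I, deriv Θ s = (μ / ((R s) ^ 2 + μ ^ 2)) * deriv Λ s)
    (X : ℝ → ℝ → ℝ × ℝ × ℝ)
    (hX : ∀ s t, X s t =
      (R s * Real.cos (t - Θ s), R s * Real.sin (t - Θ s), Λ s + μ * (t - Θ s))) :
    ∀ s ∈ I, ∀ t : ℝ,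
      (dot3 (cross3 (pd1 X s t) (pd2 X s t)) e3) ^ 2 = (U s) ^ 2 * (deriv U s) ^ 2 ∧
      dot3 (cross3 (pd1 X s t) (pd2 X s t)) (cross3 (pd1 X s t) (pd2 X s t)) = (U s) ^ 2 ∧
      (angleFun X s t) ^ 2 = (deriv U s) ^ 2 := by
  intro s hs t
  -- differentiability of the data at s
  have hRd : HasDerivAt R (deriv R s) s :=
    ((hRC.contDiffAt (hIopen.mem_nhds hs)).differentiableAt one_ne_zero).hasDerivAt
  have hΛd : HasDerivAt Λ (deriv Λ s) s :=
    ((hΛC.contDiffAt (hIopen.mem_nhds hs)).differentiableAt one_ne_zero).hasDerivAt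
  have hΘd : HasDerivAt Θ (deriv Θ s) s :=
    ((hΘC.contDiffAt (hIopen.mem_nhds hs)).differentiableAt one_ne_zero).hasDerivAt
  have hUd : HasDerivAt U (deriv U s) s :=
    ((hUC.contDiffAt (hIopen.mem_nhds hs)).differentiableAt one_ne_zero).hasDerivAt
  set c := Real.cos (t - Θ s) with hc
  set sn := Real.sin (t - Θ s) with hsn
  set r' := deriv R s
  set θ' := deriv Θ s
  set l' := deriv Λ s
  set u' := deriv U s
  -- key identity R R' = U U'
  have hRR' : R s * r' = U s * u' := by
    have hev : (fun u => R u ^ 2) =ᶠ[nhds s] (fun u => U u ^ 2 - μ ^ 2) :=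
      Filter.eventuallyEq_of_mem (hIopen.mem_nhds hs) (fun x hx => hRU x hx)
    have h1 : HasDerivAt (fun u => R u ^ 2) (2 * R s * r') s := by
      exact (hRd.pow 2).congr_deriv (by ring)
    have h2 : HasDerivAt (fun u => U u ^ 2 - μ ^ 2) (2 * U s * u') s := by
      exact ((hUd.pow 2).sub_const (μ ^ 2)).congr_deriv (by ring)
    have := h1.deriv ▸ h2.deriv ▸ hev.deriv_eq
    nlinarith [this]
  -- first partial derivative
  have hsub : HasDerivAt (fun u => t - Θ u) (-θ') s := by
    exact ((hasDerivAt_const s t).sub hΘd).congr_deriv (by ring)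
  have hcos : HasDerivAt (fun u => Real.cos (t - Θ u)) (sn * θ') s := by
    have := (Real.hasDerivAt_cos (t - Θ s)).comp s hsub
    exact this.congr_deriv (by rw [hsn]; ring)
  have hsin : HasDerivAt (fun u => Real.sin (t - Θ u)) (-(c * θ')) s := by
    have := (Real.hasDerivAt_sin (t - Θ s)).comp s hsub
    exact this.congr_deriv (by rw [hc]; ring)
  have h1 : HasDerivAt (fun u => R u * Real.cos (t - Θ u)) (r' * c + R s * (sn * θ')) s :=
    hRd.mul hcos
  have h2 : HasDerivAt (fun u => R u * Real.sin (t - Θ u)) (r' * sn + R s * (-(c * θ'))) s :=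
    hRd.mul hsin
  have h3 : HasDerivAt (fun u => Λ u + μ * (t - Θ u)) (l' + μ * (-θ')) s := by
    exact (hΛd.add ((hasDerivAt_const s μ).mul hsub)).congr_deriv (by ring)
  have hpd1 : pd1 X s t =
      (r' * c + R s * (sn * θ'), r' * sn + R s * (-(c * θ')), l' + μ * (-θ')) := by
    have hfun : (fun u => X u t) = fun u =>
        ((R u * Real.cos (t - Θ u), R u * Real.sin (t - Θ u), Λ u + μ * (t - Θ u)) : ℝ × ℝ × ℝ) :=
      funext fun u => hX u t
    rw [pd1, hfun]
    exact (h1.prodMk (h2.prodMk h3)).deriv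
  -- second partial derivative
  have g1 : HasDerivAt (fun v => R s * Real.cos (v - Θ s)) (R s * (-sn)) t := by
    have hv : HasDerivAt (fun v : ℝ => v - Θ s) 1 t := by
      simpa using (hasDerivAt_id t).sub_const (Θ s)
    have := ((Real.hasDerivAt_cos (t - Θ s)).comp t hv).const_mul (R s)
    simpa [hsn] using this
  have g2 : HasDerivAt (fun v => R s * Real.sin (v - Θ s)) (R s * c) t := by
    have hv : HasDerivAt (fun v : ℝ => v - Θ s) 1 t := by
      simpa using (hasDerivAt_id t).sub_const (Θ s)
    have := ((Real.hasDerivAt_sin (t - Θ s)).comp t hv).const_mul (R s)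
    simpa [hc] using this
  have g3 : HasDerivAt (fun v => Λ s + μ * (v - Θ s)) μ t := by
    have hv : HasDerivAt (fun v : ℝ => v - Θ s) 1 t := by
      simpa using (hasDerivAt_id t).sub_const (Θ s)
    exact ((hasDerivAt_const t (Λ s)).add ((hasDerivAt_const t μ).mul hv)).congr_deriv (by ring)
  have hpd2 : pd2 X s t = (R s * (-sn), R s * c, μ) := by
    have hfun : (fun v => X s v) = fun v =>
        ((R s * Real.cos (v - Θ s), R s * Real.sin (v - Θ s), Λ s + μ * (v - Θ s)) : ℝ × ℝ × ℝ) :=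
      funext fun v => hX s v
    rw [pd2, hfun]
    exact (g1.prodMk (g2.prodMk g3)).deriv
  -- basic trig/algebra facts
  have hpy : sn ^ 2 + c ^ 2 = 1 := by
    simpa [hsn, hc] using Real.sin_sq_add_cos_sq (t - Θ s)
  have hden : (0:ℝ) < R s ^ 2 + μ ^ 2 := by
    have := hRpos s hs; positivity
  have hU2 : U s ^ 2 = R s ^ 2 + μ ^ 2 := by
    have := hRU s hs; linarith
  have hmet : r' ^ 2 * (R s ^ 2 + μ ^ 2) + R s ^ 2 * l' ^ 2 = R s ^ 2 + μ ^ 2 := by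
    have h := hmetric s hs
    have := hden.ne'
    field_simp at h
    linarith [h]
  have hθ'v : θ' * (R s ^ 2 + μ ^ 2) = μ * l' := by
    have h : θ' = μ / (R s ^ 2 + μ ^ 2) * l' := hΘ' s hs
    rw [h]
    field_simp
  -- third component of the cross product is R R'
  have hz : dot3 (cross3 (pd1 X s t) (pd2 X s t)) e3 = R s * r' := by
    rw [hpd1, hpd2]
    simp only [dot3, cross3, e3]
    linear_combination (R s * r') * hpy
  have hnorm : dot3 (cross3 (pd1 X s t) (pd2 X s t)) (cross3 (pd1 X s t) (pd2 X s t))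
      = U s ^ 2 := by
    rw [hpd1, hpd2]
    simp only [dot3, cross3]
    rw [hU2]
    linear_combination (μ ^ 2 * r' ^ 2 + R s ^ 2 * l' ^ 2
      + R s ^ 2 * r' ^ 2 * (sn ^ 2 + c ^ 2 + 1)) * hpy + hmet
  refine ⟨by rw [hz, hRR']; ring, hnorm, ?_⟩
  have hU0 : U s ≠ 0 := by
    intro h; rw [h] at hU2; nlinarith
  have hsq : Real.sqrt (dot3 (cross3 (pd1 X s t) (pd2 X s t)) (cross3 (pd1 X s t) (pd2 X s t)))
      = |U s| := by rw [hnorm, Real.sqrt_sq_eq_abs]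
  have hang : angleFun X s t = |U s|⁻¹ * (R s * r') := by
    have h0 : angleFun X s t = |U s|⁻¹ * dot3 (cross3 (pd1 X s t) (pd2 X s t)) e3 := by
      rw [angleFun, unitNormal, hsq]
      simp only [dot3, e3, Prod.smul_fst, Prod.smul_snd, smul_eq_mul]
      ring
    rw [h0, hz]
  rw [hang, hRR', mul_pow, inv_pow, sq_abs]
  have hU2ne : U s ^ 2 ≠ 0 := pow_ne_zero 2 hU0
  field_simp
end
end

section
/- Let I ⊆ ℝ be an open interval, λ ≠ 0 and h real constants, and let U : I → ℝ be C¹ with λ²U² − h² > 0 on I. Let R̂, Λ̂, Θ̂ : I → ℝ be C¹ functions satisfying R̂ > 0, R̂² = λ²U² − h², (Λ̂')² = (λ²U²/(λ²U² − h²)²)·( λ²U²·(1 − λ²(U')²) − h² ), and Θ̂' = (h/(λ²U²))·Λ̂' on I. Define X(s,t) = (R̂(s)·cos(t/λ − Θ̂(s)), R̂(s)·sin(t/λ − Θ̂(s)), Λ̂(s) + h·(t/λ − Θ̂(s))). Then for every (s,t) ∈ I × ℝ the first fundamental form coefficients satisfy E(s,t) = 1, F(s,t) = 0, and G(s,t)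 = U(s)²; in particular all these patches (for varying λ, h) induce the same metric ds² + U(s)² dt². -/
open Real

noncomputable section

/-- Each member of Bour's two-parameter family of helicoidal surfaces
`Σ^{λ,h}` has first fundamental form `E = 1`, `F = 0`, `G = U²`, i.e. the same induced
metric `ds² + U(s)² dt²`. -/
theorem bour_family_isometric
    (I : Set ℝ) (hIopen : IsOpen I) (hIconn : I.OrdConnected)
    (lam h : ℝ) (hlam : lam ≠ 0)
    (U Rh Λh Θh : ℝ → ℝ)
    (hUC : ContDiffOn ℝ 1 U I)
    (hpos : ∀ s ∈ I, 0 < lam ^ 2 * (U s) ^ 2 - h ^ 2)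
    (hRC : ContDiffOn ℝ 1 Rh I) (hΛC : ContDiffOn ℝ 1 Λh I) (hΘC : ContDiffOn ℝ 1 Θh I)
    (hRpos : ∀ s ∈ I, 0 < Rh s)
    (hRU : ∀ s ∈ I, (Rh s) ^ 2 = lam ^ 2 * (U s) ^ 2 - h ^ 2)
    (hΛ' : ∀ s ∈ I, (deriv Λh s) ^ 2 =
      (lam ^ 2 * (U s) ^ 2 / (lam ^ 2 * (U s) ^ 2 - h ^ 2) ^ 2) *
        (lam ^ 2 * (U s) ^ 2 * (1 - lam ^ 2 * (deriv U s) ^ 2) - h ^ 2))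
    (hΘ' : ∀ s ∈ I, deriv Θh s = (h / (lam ^ 2 * (U s) ^ 2)) * deriv Λh s)
    (X : ℝ → ℝ → ℝ × ℝ × ℝ)
    (hX : ∀ s t, X s t =
      (Rh s * Real.cos (t / lam - Θh s), Rh s * Real.sin (t / lam - Θh s),
        Λh s + h * (t / lam - Θh s))) :
    ∀ s ∈ I, ∀ t : ℝ,
      dot3 (pd1 X s t) (pd1 X s t) = 1 ∧
      dot3 (pd1 X s t) (pd2 X s t) = 0 ∧
      dot3 (pd2 X s t) (pd2 X s t) = (U s) ^ 2 := by
  intro s hs t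
  have hsI : I ∈ nhds s := hIopen.mem_nhds hs
  have hApos := hpos s hs
  have hRsq := hRU s hs
  have hL2 := hΛ' s hs
  have hT := hΘ' s hs
  have hRp := hRpos s hs
  have hUd : HasDerivAt U (deriv U s) s :=
    ((hUC.contDiffAt hsI).differentiableAt one_ne_zero).hasDerivAt
  have hRd : HasDerivAt Rh (deriv Rh s) s :=
    ((hRC.contDiffAt hsI).differentiableAt one_ne_zero).hasDerivAt
  have hLd : HasDerivAt Λh (deriv Λh s) s :=
    ((hΛC.contDiffAt hsI).differentiableAt one_ne_zero).hasDerivAt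
  have hTd : HasDerivAt Θh (deriv Θh s) s :=
    ((hΘC.contDiffAt hsI).differentiableAt one_ne_zero).hasDerivAt
  set r' := deriv Rh s
  set u' := deriv U s
  set l' := deriv Λh s
  set th' := deriv Θh s
  set φ := t / lam - Θh s with hφ
  have hc2 : Real.cos φ ^ 2 + Real.sin φ ^ 2 = 1 := Real.cos_sq_add_sin_sq φ
  have hfun1 : (fun u => X u t) = fun u =>
      (Rh u * Real.cos (t / lam - Θh u), Rh u * Real.sin (t / lam - Θh u),
        Λh u + h * (t / lam - Θh u)) := funext fun u => hX u t
  have hinner : HasDerivAt (fun u => t / lam - Θh u) (-th') s := hTd.const_sub _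
  have h1a : HasDerivAt (fun u => Rh u * Real.cos (t / lam - Θh u))
      (r' * Real.cos φ + Rh s * (-Real.sin φ * -th')) s := hRd.mul hinner.cos
  have h1b : HasDerivAt (fun u => Rh u * Real.sin (t / lam - Θh u))
      (r' * Real.sin φ + Rh s * (Real.cos φ * -th')) s := hRd.mul hinner.sin
  have h1c : HasDerivAt (fun u => Λh u + h * (t / lam - Θh u))
      (l' + h * -th') s := hLd.add (hinner.const_mul h)
  have hpd1 : pd1 X s t =
      (r' * Real.cos φ + Rh s * (-Real.sin φ * -th'),
       r' * Real.sin φ + Rh s * (Real.cos φ * -th'),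
       l' + h * -th') := by
    rw [pd1, hfun1]
    exact (h1a.prodMk (h1b.prodMk h1c)).deriv
  have hfun2 : (fun v => X s v) = fun v =>
      (Rh s * Real.cos (v / lam - Θh s), Rh s * Real.sin (v / lam - Θh s),
        Λh s + h * (v / lam - Θh s)) := funext fun v => hX s v
  have hinner2 : HasDerivAt (fun v => v / lam - Θh s) (1 / lam) t := by
    simpa using ((hasDerivAt_id t).div_const lam).sub_const (Θh s)
  have h2a : HasDerivAt (fun v => Rh s * Real.cos (v / lam - Θh s))
      (Rh s * (-Real.sin φ * (1 / lam))) t := hinner2.cos.const_mul _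
  have h2b : HasDerivAt (fun v => Rh s * Real.sin (v / lam - Θh s))
      (Rh s * (Real.cos φ * (1 / lam))) t := hinner2.sin.const_mul _
  have h2c : HasDerivAt (fun v => Λh s + h * (v / lam - Θh s))
      (h * (1 / lam)) t := by
    simpa using ((hinner2.const_mul h).const_add (Λh s))
  have hpd2 : pd2 X s t =
      (Rh s * (-Real.sin φ * (1 / lam)),
       Rh s * (Real.cos φ * (1 / lam)),
       h * (1 / lam)) := by
    rw [pd2, hfun2]
    exact (h2a.prodMk (h2b.prodMk h2c)).deriv
  have heq : (fun u => Rh u ^ 2) =ᶠ[nhds s] (fun u => lam ^ 2 * U u ^ 2 - h ^ 2) :=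
    Filter.eventuallyEq_of_mem hsI hRU
  have hRHS : HasDerivAt (fun u => lam ^ 2 * U u ^ 2 - h ^ 2)
      (lam ^ 2 * (2 * U s ^ 1 * u')) s := ((hUd.pow 2).const_mul _).sub_const _
  have hRR : (2 : ℝ) * Rh s ^ 1 * r' = lam ^ 2 * (2 * U s ^ 1 * u') :=
    (hRd.pow 2).unique (hRHS.congr_of_eventuallyEq heq)
  set A := lam ^ 2 * U s ^ 2 with hAdef
  have hU2pos : 0 < A := by nlinarith [sq_nonneg h]
  have hAne0 : A ≠ 0 := ne_of_gt hU2pos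
  have hAne : A - h ^ 2 ≠ 0 := ne_of_gt hApos
  have hRne : Rh s ≠ 0 := ne_of_gt hRp
  have hrr : Rh s * r' = lam ^ 2 * (U s * u') := by
    linear_combination hRR / 2
  have hth : th' * A = h * l' := by
    rw [hT]; field_simp
  have hL2' : l' ^ 2 * (A - h ^ 2) ^ 2 = A * (A * (1 - lam ^ 2 * u' ^ 2) - h ^ 2) := by
    rw [hL2]; field_simp
  have hr2 : r' ^ 2 * (A - h ^ 2) = A * (lam ^ 2 * u' ^ 2) := by
    have h2 : (Rh s * r') ^ 2 = (lam ^ 2 * (U s * u')) ^ 2 := by rw [hrr]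
    linear_combination h2 - r' ^ 2 * hRsq
  have hc : A ^ 2 * (A - h ^ 2) ≠ 0 := by positivity
  have key2 : (r' ^ 2 + Rh s ^ 2 * th' ^ 2 + (l' - h * th') ^ 2) * (A ^ 2 * (A - h ^ 2)) =
      1 * (A ^ 2 * (A - h ^ 2)) := by
    linear_combination A ^ 2 * hr2 + A * hL2' + th' ^ 2 * A ^ 2 * (A - h ^ 2) * hRsq +
      ((A - h ^ 2) ^ 2 * (2 * h * l' + (th' * A - h * l')) -
        h * (2 * l' * (A - h ^ 2) - h * (th' * A - h * l')) * (A - h ^ 2)) * hth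
  have key : r' ^ 2 + Rh s ^ 2 * th' ^ 2 + (l' - h * th') ^ 2 = 1 :=
    mul_right_cancel₀ hc key2
  refine ⟨?_, ?_, ?_⟩
  · simp only [hpd1, dot3]
    linear_combination (r' ^ 2 + Rh s ^ 2 * th' ^ 2) * hc2 + key
  · simp only [hpd1, hpd2, dot3]
    linear_combination (-(Rh s) ^ 2 * th' / lam) * hc2 + (-th' / lam) * hRsq +
      (-(1 : ℝ) / lam) * hth
  · simp only [hpd2, dot3]
    field_simp
    linear_combination (Rh s) ^ 2 * hc2 + hRsq
end
end

section
/- Let I ⊆ ℝ be an open interval, λ ≠ 0 and h real constants, and let U : I → ℝ be C¹ with λ²U² − h² > 0 on I. Let R̂, Λ̂, Θ̂ : I → ℝ be C¹ functions satisfying R̂ > 0, R̂² = λ²U² − h², (Λ̂')² = (λ²U²/(λ²U² − h²)²)·( λ²U²·(1 − λ²(U')²) − h² ), and Θ̂' = (h/(λ²U²))·Λ̂' on I. Define X(s,t) = (R̂(s)·cos(t/λ − Θ̂(s)), R̂(s)·sin(t/λ − Θ̂(s)), Λ̂(s) + h·(t/λ − Θ̂(s))). Then for every (s,t) ∈ I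 × ℝ one has ((X_s × X_t)·e₃)² = λ²·U'(s)²·U(s)² and ‖X_s × X_t‖² = U(s)²; in particular the squared angle function satisfies (n₃)² = λ²·(U')². -/
open Real

noncomputable section

/-- For each member of Bour's two-parameter family `Σ^{λ,h}` one has
`((X_s × X_t)·e₃)² = λ²(U')²U²` and `‖X_s × X_t‖² = U²`; in particular the squared angle
function satisfies `(n₃)² = λ²(U')²`. -/
theorem bour_family_angle_function
    (I : Set ℝ) (hIopen : IsOpen I) (hIconn : I.OrdConnected)
    (lam h : ℝ) (hlam : lam ≠ 0)
    (U Rh Λh Θh : ℝ → ℝ)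
    (hUC : ContDiffOn ℝ 1 U I)
    (hpos : ∀ s ∈ I, 0 < lam ^ 2 * (U s) ^ 2 - h ^ 2)
    (hRC : ContDiffOn ℝ 1 Rh I) (hΛC : ContDiffOn ℝ 1 Λh I) (hΘC : ContDiffOn ℝ 1 Θh I)
    (hRpos : ∀ s ∈ I, 0 < Rh s)
    (hRU : ∀ s ∈ I, (Rh s) ^ 2 = lam ^ 2 * (U s) ^ 2 - h ^ 2)
    (hΛ' : ∀ s ∈ I, (deriv Λh s) ^ 2 =
      (lam ^ 2 * (U s) ^ 2 / (lam ^ 2 * (U s) ^ 2 - h ^ 2) ^ 2) *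
        (lam ^ 2 * (U s) ^ 2 * (1 - lam ^ 2 * (deriv U s) ^ 2) - h ^ 2))
    (hΘ' : ∀ s ∈ I, deriv Θh s = (h / (lam ^ 2 * (U s) ^ 2)) * deriv Λh s)
    (X : ℝ → ℝ → ℝ × ℝ × ℝ)
    (hX : ∀ s t, X s t =
      (Rh s * Real.cos (t / lam - Θh s), Rh s * Real.sin (t / lam - Θh s),
        Λh s + h * (t / lam - Θh s))) :
    ∀ s ∈ I, ∀ t : ℝ,
      (dot3 (cross3 (pd1 X s t) (pd2 X s t)) e3) ^ 2
          = lam ^ 2 * (deriv U s) ^ 2 * (U s) ^ 2 ∧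
      dot3 (cross3 (pd1 X s t) (pd2 X s t)) (cross3 (pd1 X s t) (pd2 X s t)) = (U s) ^ 2 ∧
      (angleFun X s t) ^ 2 = lam ^ 2 * (deriv U s) ^ 2 := by
  intro s hs t
  have hmem : I ∈ nhds s := hIopen.mem_nhds hs
  have hUd : HasDerivAt U (deriv U s) s :=
    ((hUC.contDiffAt hmem).differentiableAt one_ne_zero).hasDerivAt
  have hRd : HasDerivAt Rh (deriv Rh s) s :=
    ((hRC.contDiffAt hmem).differentiableAt one_ne_zero).hasDerivAt
  have hLd : HasDerivAt Λh (deriv Λh s) s :=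
    ((hΛC.contDiffAt hmem).differentiableAt one_ne_zero).hasDerivAt
  have hTd : HasDerivAt Θh (deriv Θh s) s :=
    ((hΘC.contDiffAt hmem).differentiableAt one_ne_zero).hasDerivAt
  -- key relation R * R' = lam^2 * U * U'
  have h1 := hRd.pow 2
  have hev : (fun x => lam ^ 2 * U x ^ 2 - h ^ 2) =ᶠ[nhds s] (fun x => Rh x ^ 2) := by
    filter_upwards [hmem] with x hx using (hRU x hx).symm
  have h2 : HasDerivAt (fun x => lam ^ 2 * U x ^ 2 - h ^ 2)
      (lam ^ 2 * (2 * U s ^ 1 * deriv U s)) s := ((hUd.pow 2).const_mul _).sub_const _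
  have h3 := h1.congr_of_eventuallyEq hev
  have hkey : Rh s * deriv Rh s = lam ^ 2 * (U s * deriv U s) := by
    have h4 := h2.unique h3
    push_cast at h4
    simp only [pow_one] at h4
    linear_combination -h4 / 2
  -- partial derivatives
  have hphi : HasDerivAt (fun x => t / lam - Θh x) (-deriv Θh s) s := by
    simpa using hTd.const_sub (t / lam)
  have hc1 : HasDerivAt (fun x => Rh x * Real.cos (t / lam - Θh x))
      (deriv Rh s * Real.cos (t / lam - Θh s) +
        Rh s * (-Real.sin (t / lam - Θh s) * -deriv Θh s)) s :=
    hRd.mul hphi.cos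
  have hc2 : HasDerivAt (fun x => Rh x * Real.sin (t / lam - Θh x))
      (deriv Rh s * Real.sin (t / lam - Θh s) +
        Rh s * (Real.cos (t / lam - Θh s) * -deriv Θh s)) s :=
    hRd.mul hphi.sin
  have hc3 : HasDerivAt (fun x => Λh x + h * (t / lam - Θh x))
      (deriv Λh s + h * -deriv Θh s) s :=
    hLd.add (hphi.const_mul h)
  have hpd1 : pd1 X s t =
      (deriv Rh s * Real.cos (t / lam - Θh s) +
         Rh s * (-Real.sin (t / lam - Θh s) * -deriv Θh s),
       deriv Rh s * Real.sin (t / lam - Θh s) +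
         Rh s * (Real.cos (t / lam - Θh s) * -deriv Θh s),
       deriv Λh s + h * -deriv Θh s) := by
    have hXe : (fun x => X x t) = fun x =>
        (Rh x * Real.cos (t / lam - Θh x), Rh x * Real.sin (t / lam - Θh x),
          Λh x + h * (t / lam - Θh x)) := funext fun x => hX x t
    rw [pd1, hXe]
    exact (hc1.prodMk (hc2.prodMk hc3)).deriv
  have hpsi : HasDerivAt (fun v => v / lam - Θh s) (1 / lam) t := by
    simpa using ((hasDerivAt_id t).div_const lam).sub_const (Θh s)
  have hd1 : HasDerivAt (fun v => Rh s * Real.cos (v / lam - Θh s))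
      (Rh s * (-Real.sin (t / lam - Θh s) * (1 / lam))) t := hpsi.cos.const_mul (Rh s)
  have hd2 : HasDerivAt (fun v => Rh s * Real.sin (v / lam - Θh s))
      (Rh s * (Real.cos (t / lam - Θh s) * (1 / lam))) t := hpsi.sin.const_mul (Rh s)
  have hd3 : HasDerivAt (fun v => Λh s + h * (v / lam - Θh s)) (h * (1 / lam)) t :=
    (hpsi.const_mul h).const_add (Λh s)
  have hpd2 : pd2 X s t =
      (Rh s * (-Real.sin (t / lam - Θh s) * (1 / lam)),
       Rh s * (Real.cos (t / lam - Θh s) * (1 / lam)),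
       h * (1 / lam)) := by
    have hXe : (fun v => X s v) = fun v =>
        (Rh s * Real.cos (v / lam - Θh s), Rh s * Real.sin (v / lam - Θh s),
          Λh s + h * (v / lam - Θh s)) := funext fun v => hX s v
    rw [pd2, hXe]
    exact (hd1.prodMk (hd2.prodMk hd3)).deriv
  -- facts
  have hDpos := hpos s hs
  have hD : lam ^ 2 * U s ^ 2 - h ^ 2 ≠ 0 := ne_of_gt hDpos
  have hu0 : U s ≠ 0 := by
    intro h0
    rw [h0] at hDpos
    nlinarith [sq_nonneg h]
  have htrig : Real.sin (t / lam - Θh s) ^ 2 + Real.cos (t / lam - Θh s) ^ 2 = 1 :=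
    Real.sin_sq_add_cos_sq _
  have hK : (Rh s * deriv Rh s) ^ 2 = (lam ^ 2 * (U s * deriv U s)) ^ 2 := by rw [hkey]
  have hH : Rh s ^ 2 = lam ^ 2 * U s ^ 2 - h ^ 2 := hRU s hs
  have hHL : deriv Λh s ^ 2 * (lam ^ 2 * U s ^ 2 - h ^ 2) ^ 2 =
      lam ^ 2 * U s ^ 2 *
        (lam ^ 2 * U s ^ 2 * (1 - lam ^ 2 * deriv U s ^ 2) - h ^ 2) := by
    have h0 := hΛ' s hs
    field_simp at h0
    linear_combination h0
  -- clean cross product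
  have hcross : cross3 (pd1 X s t) (pd2 X s t) =
      ((h * deriv Rh s * Real.sin (t / lam - Θh s)
          - deriv Λh s * Rh s * Real.cos (t / lam - Θh s)) / lam,
       -((deriv Λh s * Rh s * Real.sin (t / lam - Θh s)
          + h * deriv Rh s * Real.cos (t / lam - Θh s)) / lam),
       Rh s * deriv Rh s / lam) := by
    rw [hpd1, hpd2]
    simp only [cross3, Prod.mk.injEq]
    set si := Real.sin (t / lam - Θh s) with hsi
    set co := Real.cos (t / lam - Θh s) with hco
    refine ⟨by field_simp; ring, by field_simp; ring, ?_⟩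
    field_simp
    linear_combination (Rh s * deriv Rh s) * htrig
  have goal1 : (dot3 (cross3 (pd1 X s t) (pd2 X s t)) e3) ^ 2
      = lam ^ 2 * deriv U s ^ 2 * U s ^ 2 := by
    rw [hcross]
    simp only [dot3, e3, mul_zero, zero_add, mul_one]
    field_simp
    linear_combination hK
  have goal2 : dot3 (cross3 (pd1 X s t) (pd2 X s t)) (cross3 (pd1 X s t) (pd2 X s t))
      = U s ^ 2 := by
    rw [hcross]
    simp only [dot3]
    have hE : ((h * deriv Rh s * Real.sin (t / lam - Θh s)
            - deriv Λh s * Rh s * Real.cos (t / lam - Θh s)) ^ 2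
          + (deriv Λh s * Rh s * Real.sin (t / lam - Θh s)
            + h * deriv Rh s * Real.cos (t / lam - Θh s)) ^ 2
          + (Rh s * deriv Rh s) ^ 2) * (lam ^ 2 * U s ^ 2 - h ^ 2)
        = (U s ^ 2 * lam ^ 2) * (lam ^ 2 * U s ^ 2 - h ^ 2) := by
      linear_combination
        ((lam ^ 2 * U s ^ 2 - h ^ 2) *
            (h ^ 2 * deriv Rh s ^ 2 + deriv Λh s ^ 2 * Rh s ^ 2)) * htrig
        + (deriv Λh s ^ 2 * (lam ^ 2 * U s ^ 2 - h ^ 2) - h ^ 2 * deriv Rh s ^ 2) * hH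
        + (h ^ 2 + (lam ^ 2 * U s ^ 2 - h ^ 2)) * hK + hHL
    have hc := mul_right_cancel₀ hD hE
    set si := Real.sin (t / lam - Θh s) with hsi
    set co := Real.cos (t / lam - Θh s) with hco
    field_simp
    linear_combination hc
  refine ⟨goal1, goal2, ?_⟩
  rw [angleFun, unitNormal, goal2, hcross]
  rw [Real.sqrt_sq_eq_abs]
  simp only [dot3, e3, Prod.smul_fst, Prod.smul_snd, smul_eq_mul, mul_zero, zero_add, mul_one]
  have hz : (Rh s * deriv Rh s / lam) ^ 2 = lam ^ 2 * deriv U s ^ 2 * U s ^ 2 := by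
    field_simp
    linear_combination hK
  rw [mul_pow, hz, inv_pow, sq_abs]
  field_simp
end
end

section
/- Let I ⊆ ℝ be an open interval, μ ∈ ℝ, and let R, Λ, Θ, U : I → ℝ be C² functions with R > 0, U > 0, R² = U² − μ², (R')² + (R²/(R² + μ²))·(Λ')² = 1, and Θ' = (μ/(R² + μ²))·Λ' on I. Define X(s,t) = (R(s)·cos(t − Θ(s)), R(s)·sin(t − Θ(s)), Λ(s) + μ·(t − Θ(s))), and assume X_s × X_t ≠ 0 on I × ℝ. Then the Gaussian curvature of X satisfies K(s,t) = −U''(s)/U(s) for all (s,t) ∈ I × ℝ. -/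
open Real

noncomputable section

/-- dot product with a scalar multiple. -/
lemma dot3_smul_right (v w : ℝ × ℝ × ℝ) (r : ℝ) : dot3 v (r • w) = r * dot3 v w := by
  simp only [dot3, Prod.smul_fst, Prod.smul_snd, smul_eq_mul]
  ring

/-- Purely algebraic core of the Gauss curvature computation for Bour's patch. -/
lemma key_alg (μ a a1 a2 b1 b2 d1 d2 u0 u1 u2 c e : ℝ)
    (ha : 0 < a) (hu : 0 < u0)
    (hce : c ^ 2 + e ^ 2 = 1)
    (E1 : d1 * (a ^ 2 + μ ^ 2) = μ * b1)
    (E2 : a1 ^ 2 * (a ^ 2 + μ ^ 2) + a ^ 2 * b1 ^ 2 = a ^ 2 + μ ^ 2)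
    (E3 : a1 * a2 * (a ^ 2 + μ ^ 2) + a * a1 ^ 3 + a * a1 * b1 ^ 2 + a ^ 2 * b1 * b2 = a * a1)
    (h3 : a ^ 2 + μ ^ 2 = u0 ^ 2)
    (h4 : a * a1 = u0 * u1)
    (h5 : a1 ^ 2 + a * a2 = u1 ^ 2 + u0 * u2) :
    (dot3 ((a2 - a * d1 ^ 2) * c + (2 * a1 * d1 + a * d2) * e,
           (a2 - a * d1 ^ 2) * e - (2 * a1 * d1 + a * d2) * c,
           b2 - μ * d2)
        ((Real.sqrt (dot3
            (cross3 (a1 * c + a * e * d1, a1 * e - a * c * d1, b1 - μ * d1) (-(a * e), a * c, μ))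
            (cross3 (a1 * c + a * e * d1, a1 * e - a * c * d1, b1 - μ * d1) (-(a * e), a * c, μ))))⁻¹ •
          cross3 (a1 * c + a * e * d1, a1 * e - a * c * d1, b1 - μ * d1) (-(a * e), a * c, μ)) *
      dot3 (-(a * c), -(a * e), 0)
        ((Real.sqrt (dot3
            (cross3 (a1 * c + a * e * d1, a1 * e - a * c * d1, b1 - μ * d1) (-(a * e), a * c, μ))
            (cross3 (a1 * c + a * e * d1, a1 * e - a * c * d1, b1 - μ * d1) (-(a * e), a * c, μ))))⁻¹ •
          cross3 (a1 * c + a * e * d1, a1 * e - a * c * d1, b1 - μ * d1) (-(a * e), a * c, μ))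
      - (dot3 (-(a1 * e) + a * c * d1, a1 * c + a * e * d1, 0)
        ((Real.sqrt (dot3
            (cross3 (a1 * c + a * e * d1, a1 * e - a * c * d1, b1 - μ * d1) (-(a * e), a * c, μ))
            (cross3 (a1 * c + a * e * d1, a1 * e - a * c * d1, b1 - μ * d1) (-(a * e), a * c, μ))))⁻¹ •
          cross3 (a1 * c + a * e * d1, a1 * e - a * c * d1, b1 - μ * d1) (-(a * e), a * c, μ))) ^ 2)
    / (dot3 (a1 * c + a * e * d1, a1 * e - a * c * d1, b1 - μ * d1)
          (a1 * c + a * e * d1, a1 * e - a * c * d1, b1 - μ * d1) *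
        dot3 (-(a * e), a * c, μ) (-(a * e), a * c, μ)
        - (dot3 (a1 * c + a * e * d1, a1 * e - a * c * d1, b1 - μ * d1) (-(a * e), a * c, μ)) ^ 2)
    = -u2 / u0 := by
  have hQpos : (0 : ℝ) < a ^ 2 + μ ^ 2 :=
    add_pos_of_pos_of_nonneg (pow_pos ha 2) (sq_nonneg μ)
  have hQne : (a ^ 2 + μ ^ 2) ≠ 0 := ne_of_gt hQpos
  have hu0ne : u0 ≠ 0 := ne_of_gt hu
  -- first fundamental form
  have hE : dot3 (a1 * c + a * e * d1, a1 * e - a * c * d1, b1 - μ * d1)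
      (a1 * c + a * e * d1, a1 * e - a * c * d1, b1 - μ * d1) = 1 := by
    have hq : dot3 (a1 * c + a * e * d1, a1 * e - a * c * d1, b1 - μ * d1)
        (a1 * c + a * e * d1, a1 * e - a * c * d1, b1 - μ * d1) * (a ^ 2 + μ ^ 2) ^ 2
        = 1 * (a ^ 2 + μ ^ 2) ^ 2 := by
      simp only [dot3]
      linear_combination ((a1 ^ 2 + a ^ 2 * d1 ^ 2) * (a ^ 2 + μ ^ 2) ^ 2) * hce
        + ((a ^ 2 + μ ^ 2) ^ 2 * d1 - μ * b1 * (a ^ 2 + μ ^ 2)) * E1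
        + (a ^ 2 + μ ^ 2) * E2
    exact mul_right_cancel₀ (pow_ne_zero 2 hQne) hq
  have hF : dot3 (a1 * c + a * e * d1, a1 * e - a * c * d1, b1 - μ * d1)
      (-(a * e), a * c, μ) = 0 := by
    simp only [dot3]
    linear_combination (-(a ^ 2 * d1)) * hce - E1
  have hG : dot3 (-(a * e), a * c, μ) (-(a * e), a * c, μ) = u0 ^ 2 := by
    simp only [dot3]
    linear_combination (a ^ 2) * hce + h3
  -- norm of the cross product
  have hW : dot3
      (cross3 (a1 * c + a * e * d1, a1 * e - a * c * d1, b1 - μ * d1) (-(a * e), a * c, μ))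
      (cross3 (a1 * c + a * e * d1, a1 * e - a * c * d1, b1 - μ * d1) (-(a * e), a * c, μ))
      = u0 ^ 2 := by
    have hlag : dot3
        (cross3 (a1 * c + a * e * d1, a1 * e - a * c * d1, b1 - μ * d1) (-(a * e), a * c, μ))
        (cross3 (a1 * c + a * e * d1, a1 * e - a * c * d1, b1 - μ * d1) (-(a * e), a * c, μ))
        = dot3 (a1 * c + a * e * d1, a1 * e - a * c * d1, b1 - μ * d1)
            (a1 * c + a * e * d1, a1 * e - a * c * d1, b1 - μ * d1) *
          dot3 (-(a * e), a * c, μ) (-(a * e), a * c, μ)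
          - (dot3 (a1 * c + a * e * d1, a1 * e - a * c * d1, b1 - μ * d1)
              (-(a * e), a * c, μ)) ^ 2 := by
      simp only [dot3, cross3]
      ring
    rw [hlag, hE, hF, hG]
    ring
  have hsq : Real.sqrt (dot3
      (cross3 (a1 * c + a * e * d1, a1 * e - a * c * d1, b1 - μ * d1) (-(a * e), a * c, μ))
      (cross3 (a1 * c + a * e * d1, a1 * e - a * c * d1, b1 - μ * d1) (-(a * e), a * c, μ)))
      = u0 := by
    rw [hW, Real.sqrt_sq hu.le]
  -- second fundamental form (unnormalized)
  have heu : dot3 ((a2 - a * d1 ^ 2) * c + (2 * a1 * d1 + a * d2) * e,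
      (a2 - a * d1 ^ 2) * e - (2 * a1 * d1 + a * d2) * c, b2 - μ * d2)
      (cross3 (a1 * c + a * e * d1, a1 * e - a * c * d1, b1 - μ * d1) (-(a * e), a * c, μ))
      = -(a * b1 * a2) + a ^ 2 * b1 * d1 ^ 2 + 2 * μ * a1 ^ 2 * d1 + a * a1 * b2 := by
    simp only [dot3, cross3]
    linear_combination (-((a2 - a * d1 ^ 2) * a * b1) + (2 * a1 * d1 + a * d2) * μ * a1
      + (b2 - μ * d2) * a * a1) * hce
  have hgu : dot3 (-(a * c), -(a * e), 0)
      (cross3 (a1 * c + a * e * d1, a1 * e - a * c * d1, b1 - μ * d1) (-(a * e), a * c, μ))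
      = a ^ 2 * b1 := by
    simp only [dot3, cross3]
    linear_combination (a ^ 2 * b1) * hce
  have hfu : dot3 (-(a1 * e) + a * c * d1, a1 * c + a * e * d1, 0)
      (cross3 (a1 * c + a * e * d1, a1 * e - a * c * d1, b1 - μ * d1) (-(a * e), a * c, μ))
      = -μ := by
    have hq : dot3 (-(a1 * e) + a * c * d1, a1 * c + a * e * d1, 0)
        (cross3 (a1 * c + a * e * d1, a1 * e - a * c * d1, b1 - μ * d1) (-(a * e), a * c, μ))
        * (a ^ 2 + μ ^ 2) = -μ * (a ^ 2 + μ ^ 2) := by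
      simp only [dot3, cross3]
      linear_combination ((-(μ * a1 ^ 2) - a ^ 2 * b1 * d1) * (a ^ 2 + μ ^ 2)) * hce
        + (-(a ^ 2 * b1)) * E1 + (-μ) * E2
    exact mul_right_cancel₀ hQne hq
  -- key algebraic identities
  have key1 : (-(a * b1 * a2) + a ^ 2 * b1 * d1 ^ 2 + 2 * μ * a1 ^ 2 * d1 + a * a1 * b2)
      * (a ^ 2 * b1) - μ ^ 2 = -(μ ^ 2 * a1 ^ 2 + a * a2 * (a ^ 2 + μ ^ 2)) := by
    have hq : ((-(a * b1 * a2) + a ^ 2 * b1 * d1 ^ 2 + 2 * μ * a1 ^ 2 * d1 + a * a1 * b2)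
        * (a ^ 2 * b1) - μ ^ 2) * (a ^ 2 + μ ^ 2) ^ 2
        = (-(μ ^ 2 * a1 ^ 2 + a * a2 * (a ^ 2 + μ ^ 2))) * (a ^ 2 + μ ^ 2) ^ 2 := by
      linear_combination (a ^ 4 * b1 ^ 2 * (d1 * (a ^ 2 + μ ^ 2) + μ * b1)
          + 2 * μ * a1 ^ 2 * a ^ 2 * b1 * (a ^ 2 + μ ^ 2)) * E1
        + (-(a * a2 * (a ^ 2 + μ ^ 2) ^ 2)
            + μ ^ 2 * (a ^ 2 * b1 ^ 2 + (a ^ 2 + μ ^ 2) - (a ^ 2 + μ ^ 2) * a1 ^ 2)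
            + 2 * μ ^ 2 * a1 ^ 2 * (a ^ 2 + μ ^ 2) - a1 ^ 2 * (a ^ 2 + μ ^ 2) ^ 2) * E2
        + (a * a1 * (a ^ 2 + μ ^ 2) ^ 2) * E3
    exact mul_right_cancel₀ (pow_ne_zero 2 hQne) hq
  have key2 : u2 * u0 ^ 3 = μ ^ 2 * a1 ^ 2 + a * a2 * (a ^ 2 + μ ^ 2) := by
    linear_combination (-(u0 ^ 2)) * h5 + (a * a1 + u0 * u1) * h4 + (-(a1 ^ 2) - a * a2) * h3
  have hnum : (-(a * b1 * a2) + a ^ 2 * b1 * d1 ^ 2 + 2 * μ * a1 ^ 2 * d1 + a * a1 * b2)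
      * (a ^ 2 * b1) - μ ^ 2 = -(u2 * u0 ^ 3) := by
    linear_combination key1 + key2
  -- assemble
  rw [hsq]
  rw [dot3_smul_right, dot3_smul_right, dot3_smul_right, heu, hgu, hfu, hE, hF, hG]
  field_simp
  linear_combination hnum

/-- The Gaussian curvature of Bour's helicoidal patch equals
`K = −U''/U`. -/
theorem bour_gauss_curvature
    (I : Set ℝ) (hIopen : IsOpen I) (hIconn : I.OrdConnected) (μ : ℝ)
    (R Λ Θ U : ℝ → ℝ)
    (hRC : ContDiffOn ℝ 2 R I) (hΛC : ContDiffOn ℝ 2 Λ I)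
    (hΘC : ContDiffOn ℝ 2 Θ I) (hUC : ContDiffOn ℝ 2 U I)
    (hRpos : ∀ s ∈ I, 0 < R s) (hUpos : ∀ s ∈ I, 0 < U s)
    (hRU : ∀ s ∈ I, (R s) ^ 2 = (U s) ^ 2 - μ ^ 2)
    (hmetric : ∀ s ∈ I,
      (deriv R s) ^ 2 + ((R s) ^ 2 / ((R s) ^ 2 + μ ^ 2)) * (deriv Λ s) ^ 2 = 1)
    (hΘ' : ∀ s ∈ I, deriv Θ s = (μ / ((R s) ^ 2 + μ ^ 2)) * deriv Λ s)
    (X : ℝ → ℝ → ℝ × ℝ × ℝ)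
    (hX : ∀ s t, X s t =
      (R s * Real.cos (t - Θ s), R s * Real.sin (t - Θ s), Λ s + μ * (t - Θ s)))
    (hcross : ∀ s ∈ I, ∀ t : ℝ, cross3 (pd1 X s t) (pd2 X s t) ≠ 0) :
    ∀ s ∈ I, ∀ t : ℝ, gauss X s t = -(deriv (deriv U) s) / U s := by
  intro s hs t
  have hIs : I ∈ nhds s := hIopen.mem_nhds hs
  have h1le : (1 : WithTop ℕ∞) ≤ 2 := by norm_num
  have h12 : (1 : WithTop ℕ∞) + 1 ≤ 2 := by norm_num
  -- differentiability facts
  have hRd : ∀ x ∈ I, HasDerivAt R (deriv R x) x := fun x hx =>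
    ((hRC.differentiableOn (by norm_num)).differentiableAt (hIopen.mem_nhds hx)).hasDerivAt
  have hΛd : ∀ x ∈ I, HasDerivAt Λ (deriv Λ x) x := fun x hx =>
    ((hΛC.differentiableOn (by norm_num)).differentiableAt (hIopen.mem_nhds hx)).hasDerivAt
  have hΘd : ∀ x ∈ I, HasDerivAt Θ (deriv Θ x) x := fun x hx =>
    ((hΘC.differentiableOn (by norm_num)).differentiableAt (hIopen.mem_nhds hx)).hasDerivAt
  have hUd : ∀ x ∈ I, HasDerivAt U (deriv U x) x := fun x hx =>
    ((hUC.differentiableOn (by norm_num)).differentiableAt (hIopen.mem_nhds hx)).hasDerivAt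
  have hR'd : ∀ x ∈ I, HasDerivAt (deriv R) (deriv (deriv R) x) x := fun x hx =>
    (((hRC.deriv_of_isOpen hIopen h12).differentiableOn one_ne_zero).differentiableAt
      (hIopen.mem_nhds hx)).hasDerivAt
  have hΛ'd : ∀ x ∈ I, HasDerivAt (deriv Λ) (deriv (deriv Λ) x) x := fun x hx =>
    (((hΛC.deriv_of_isOpen hIopen h12).differentiableOn one_ne_zero).differentiableAt
      (hIopen.mem_nhds hx)).hasDerivAt
  have hΘ'd : ∀ x ∈ I, HasDerivAt (deriv Θ) (deriv (deriv Θ) x) x := fun x hx =>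
    (((hΘC.deriv_of_isOpen hIopen h12).differentiableOn one_ne_zero).differentiableAt
      (hIopen.mem_nhds hx)).hasDerivAt
  have hU'd : ∀ x ∈ I, HasDerivAt (deriv U) (deriv (deriv U) x) x := fun x hx =>
    (((hUC.deriv_of_isOpen hIopen h12).differentiableOn one_ne_zero).differentiableAt
      (hIopen.mem_nhds hx)).hasDerivAt
  -- first partial derivative in s
  have hpd1 : ∀ x ∈ I, ∀ τ : ℝ, pd1 X x τ =
      (deriv R x * Real.cos (τ - Θ x) + R x * Real.sin (τ - Θ x) * deriv Θ x,
       deriv R x * Real.sin (τ - Θ x) - R x * Real.cos (τ - Θ x) * deriv Θ x,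
       deriv Λ x - μ * deriv Θ x) := by
    intro x hx τ
    have hXf : (fun y => X y τ) = fun y =>
        ((R y * Real.cos (τ - Θ y), R y * Real.sin (τ - Θ y), Λ y + μ * (τ - Θ y)) :
          ℝ × ℝ × ℝ) :=
      funext fun y => hX y τ
    have hφ : HasDerivAt (fun y => τ - Θ y) (-deriv Θ x) x := (hΘd x hx).const_sub τ
    have hA : HasDerivAt (fun y => R y * Real.cos (τ - Θ y))
        (deriv R x * Real.cos (τ - Θ x) + R x * Real.sin (τ - Θ x) * deriv Θ x) x := by
      have h := (hRd x hx).mul hφ.cos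
      exact h.congr_deriv (by ring)
    have hB : HasDerivAt (fun y => R y * Real.sin (τ - Θ y))
        (deriv R x * Real.sin (τ - Θ x) - R x * Real.cos (τ - Θ x) * deriv Θ x) x := by
      have h := (hRd x hx).mul hφ.sin
      exact h.congr_deriv (by ring)
    have hC : HasDerivAt (fun y => Λ y + μ * (τ - Θ y)) (deriv Λ x - μ * deriv Θ x) x := by
      have h := (hΛd x hx).add (hφ.const_mul μ)
      exact h.congr_deriv (by ring)
    simp only [pd1]
    rw [hXf]
    exact (hA.prodMk (hB.prodMk hC)).deriv
  -- first partial derivative in t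
  have hpd2 : ∀ x : ℝ, ∀ τ : ℝ, pd2 X x τ =
      (-(R x * Real.sin (τ - Θ x)), R x * Real.cos (τ - Θ x), μ) := by
    intro x τ
    have hXf : (fun v => X x v) = fun v =>
        ((R x * Real.cos (v - Θ x), R x * Real.sin (v - Θ x), Λ x + μ * (v - Θ x)) :
          ℝ × ℝ × ℝ) :=
      funext fun v => hX x v
    have hφ : HasDerivAt (fun v : ℝ => v - Θ x) 1 τ := (hasDerivAt_id τ).sub_const (Θ x)
    have hA : HasDerivAt (fun v => R x * Real.cos (v - Θ x))
        (-(R x * Real.sin (τ - Θ x))) τ := by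
      have h := hφ.cos.const_mul (R x)
      exact h.congr_deriv (by ring)
    have hB : HasDerivAt (fun v => R x * Real.sin (v - Θ x)) (R x * Real.cos (τ - Θ x)) τ := by
      have h := hφ.sin.const_mul (R x)
      exact h.congr_deriv (by ring)
    have hC : HasDerivAt (fun v => Λ x + μ * (v - Θ x)) μ τ := by
      have h := (hasDerivAt_const τ (Λ x)).add (hφ.const_mul μ)
      exact h.congr_deriv (by ring)
    simp only [pd2]
    rw [hXf]
    exact (hA.prodMk (hB.prodMk hC)).deriv
  -- second partials
  have hpd22 : ∀ τ : ℝ, pd2 (pd2 X) s τ =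
      (-(R s * Real.cos (τ - Θ s)), -(R s * Real.sin (τ - Θ s)), 0) := by
    intro τ
    have hXf : (fun v => pd2 X s v) = fun v =>
        ((-(R s * Real.sin (v - Θ s)), R s * Real.cos (v - Θ s), μ) : ℝ × ℝ × ℝ) :=
      funext fun v => hpd2 s v
    have hφ : HasDerivAt (fun v : ℝ => v - Θ s) 1 τ := (hasDerivAt_id τ).sub_const (Θ s)
    have hA : HasDerivAt (fun v => -(R s * Real.sin (v - Θ s)))
        (-(R s * Real.cos (τ - Θ s))) τ := by
      have h := (hφ.sin.const_mul (R s)).neg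
      exact h.congr_deriv (by ring)
    have hB : HasDerivAt (fun v => R s * Real.cos (v - Θ s))
        (-(R s * Real.sin (τ - Θ s))) τ := by
      have h := hφ.cos.const_mul (R s)
      exact h.congr_deriv (by ring)
    have hC : HasDerivAt (fun _ : ℝ => μ) 0 τ := hasDerivAt_const τ μ
    have hunf : pd2 (pd2 X) s τ = deriv (fun v => pd2 X s v) τ := rfl
    rw [hunf, hXf]
    exact (hA.prodMk (hB.prodMk hC)).deriv
  have hpd12 : ∀ τ : ℝ, pd2 (pd1 X) s τ =
      (-(deriv R s * Real.sin (τ - Θ s)) + R s * Real.cos (τ - Θ s) * deriv Θ s,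
       deriv R s * Real.cos (τ - Θ s) + R s * Real.sin (τ - Θ s) * deriv Θ s, 0) := by
    intro τ
    have hXf : (fun v => pd1 X s v) = fun v =>
        ((deriv R s * Real.cos (v - Θ s) + R s * Real.sin (v - Θ s) * deriv Θ s,
          deriv R s * Real.sin (v - Θ s) - R s * Real.cos (v - Θ s) * deriv Θ s,
          deriv Λ s - μ * deriv Θ s) : ℝ × ℝ × ℝ) :=
      funext fun v => hpd1 s hs v
    have hφ : HasDerivAt (fun v : ℝ => v - Θ s) 1 τ := (hasDerivAt_id τ).sub_const (Θ s)
    have hA : HasDerivAt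
        (fun v => deriv R s * Real.cos (v - Θ s) + R s * Real.sin (v - Θ s) * deriv Θ s)
        (-(deriv R s * Real.sin (τ - Θ s)) + R s * Real.cos (τ - Θ s) * deriv Θ s) τ := by
      have h := (hφ.cos.const_mul (deriv R s)).add
        ((hφ.sin.const_mul (R s)).mul_const (deriv Θ s))
      exact h.congr_deriv (by ring)
    have hB : HasDerivAt
        (fun v => deriv R s * Real.sin (v - Θ s) - R s * Real.cos (v - Θ s) * deriv Θ s)
        (deriv R s * Real.cos (τ - Θ s) + R s * Real.sin (τ - Θ s) * deriv Θ s) τ := by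
      have h := (hφ.sin.const_mul (deriv R s)).sub
        ((hφ.cos.const_mul (R s)).mul_const (deriv Θ s))
      exact h.congr_deriv (by ring)
    have hC : HasDerivAt (fun _ : ℝ => deriv Λ s - μ * deriv Θ s) 0 τ := hasDerivAt_const _ _
    have hunf : pd2 (pd1 X) s τ = deriv (fun v => pd1 X s v) τ := rfl
    rw [hunf, hXf]
    exact (hA.prodMk (hB.prodMk hC)).deriv
  have hpd11 : pd1 (pd1 X) s t =
      ((deriv (deriv R) s - R s * deriv Θ s ^ 2) * Real.cos (t - Θ s)
         + (2 * deriv R s * deriv Θ s + R s * deriv (deriv Θ) s) * Real.sin (t - Θ s),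
       (deriv (deriv R) s - R s * deriv Θ s ^ 2) * Real.sin (t - Θ s)
         - (2 * deriv R s * deriv Θ s + R s * deriv (deriv Θ) s) * Real.cos (t - Θ s),
       deriv (deriv Λ) s - μ * deriv (deriv Θ) s) := by
    have hev : (fun u => pd1 X u t) =ᶠ[nhds s] fun u =>
        ((deriv R u * Real.cos (t - Θ u) + R u * Real.sin (t - Θ u) * deriv Θ u,
          deriv R u * Real.sin (t - Θ u) - R u * Real.cos (t - Θ u) * deriv Θ u,
          deriv Λ u - μ * deriv Θ u) : ℝ × ℝ × ℝ) := by
      filter_upwards [hIs] with u hu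
      exact hpd1 u hu t
    have hφ : HasDerivAt (fun u => t - Θ u) (-deriv Θ s) s := (hΘd s hs).const_sub t
    have hA : HasDerivAt
        (fun u => deriv R u * Real.cos (t - Θ u) + R u * Real.sin (t - Θ u) * deriv Θ u)
        ((deriv (deriv R) s - R s * deriv Θ s ^ 2) * Real.cos (t - Θ s)
          + (2 * deriv R s * deriv Θ s + R s * deriv (deriv Θ) s) * Real.sin (t - Θ s)) s := by
      have h := ((hR'd s hs).mul hφ.cos).add
        (((hRd s hs).mul hφ.sin).mul (hΘ'd s hs))
      exact h.congr_deriv (by simp only [Pi.mul_apply]; ring)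
    have hB : HasDerivAt
        (fun u => deriv R u * Real.sin (t - Θ u) - R u * Real.cos (t - Θ u) * deriv Θ u)
        ((deriv (deriv R) s - R s * deriv Θ s ^ 2) * Real.sin (t - Θ s)
          - (2 * deriv R s * deriv Θ s + R s * deriv (deriv Θ) s) * Real.cos (t - Θ s)) s := by
      have h := ((hR'd s hs).mul hφ.sin).sub
        (((hRd s hs).mul hφ.cos).mul (hΘ'd s hs))
      exact h.congr_deriv (by simp only [Pi.mul_apply]; ring)
    have hC : HasDerivAt (fun u => deriv Λ u - μ * deriv Θ u)
        (deriv (deriv Λ) s - μ * deriv (deriv Θ) s) s := by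
      have h := (hΛ'd s hs).sub ((hΘ'd s hs).const_mul μ)
      exact h
    have hunf : pd1 (pd1 X) s t = deriv (fun u => pd1 X u t) s := rfl
    rw [hunf, hev.deriv_eq]
    exact (hA.prodMk (hB.prodMk hC)).deriv
  -- scalar constraints at s
  have ha : 0 < R s := hRpos s hs
  have hu : 0 < U s := hUpos s hs
  have hQpos : ∀ x ∈ I, (0 : ℝ) < R x ^ 2 + μ ^ 2 := fun x hx =>
    add_pos_of_pos_of_nonneg (pow_pos (hRpos x hx) 2) (sq_nonneg μ)
  have hQne : (R s ^ 2 + μ ^ 2) ≠ 0 := ne_of_gt (hQpos s hs)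
  have E1 : deriv Θ s * (R s ^ 2 + μ ^ 2) = μ * deriv Λ s := by
    rw [hΘ' s hs]
    field_simp
  have hmQ : ∀ x ∈ I, (deriv R x) ^ 2 * (R x ^ 2 + μ ^ 2) + R x ^ 2 * (deriv Λ x) ^ 2
      = R x ^ 2 + μ ^ 2 := by
    intro x hx
    have hxne : (R x ^ 2 + μ ^ 2) ≠ 0 := ne_of_gt (hQpos x hx)
    have h := hmetric x hx
    field_simp at h
    linear_combination h
  have E2 : (deriv R s) ^ 2 * (R s ^ 2 + μ ^ 2) + R s ^ 2 * (deriv Λ s) ^ 2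
      = R s ^ 2 + μ ^ 2 := hmQ s hs
  -- derivative of the metric identity
  have E3 : deriv R s * deriv (deriv R) s * (R s ^ 2 + μ ^ 2) + R s * (deriv R s) ^ 3
      + R s * deriv R s * (deriv Λ s) ^ 2 + R s ^ 2 * deriv Λ s * deriv (deriv Λ) s
      = R s * deriv R s := by
    have hev : (fun x => (deriv R x) ^ 2 * (R x ^ 2 + μ ^ 2) + R x ^ 2 * (deriv Λ x) ^ 2
        - (R x ^ 2 + μ ^ 2)) =ᶠ[nhds s] (fun _ => 0) := by
      filter_upwards [hIs] with x hx
      have := hmQ x hx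
      linarith
    have hq : HasDerivAt (fun x => R x ^ 2 + μ ^ 2) (2 * R s * deriv R s) s := by
      have h := ((hRd s hs).pow 2).add_const (μ ^ 2)
      exact h.congr_deriv (by push_cast; ring)
    have hD : HasDerivAt (fun x => (deriv R x) ^ 2 * (R x ^ 2 + μ ^ 2)
        + R x ^ 2 * (deriv Λ x) ^ 2 - (R x ^ 2 + μ ^ 2))
        (2 * deriv R s * deriv (deriv R) s * (R s ^ 2 + μ ^ 2)
          + (deriv R s) ^ 2 * (2 * R s * deriv R s)
          + (2 * R s * deriv R s) * (deriv Λ s) ^ 2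
          + R s ^ 2 * (2 * deriv Λ s * deriv (deriv Λ) s)
          - 2 * R s * deriv R s) s := by
      have h := ((((hR'd s hs).pow 2).mul hq).add
        (((hRd s hs).pow 2).mul ((hΛ'd s hs).pow 2))).sub hq
      exact h.congr_deriv (by simp only [Pi.pow_apply, Pi.mul_apply]; push_cast; ring)
    have h0 : deriv (fun x => (deriv R x) ^ 2 * (R x ^ 2 + μ ^ 2)
        + R x ^ 2 * (deriv Λ x) ^ 2 - (R x ^ 2 + μ ^ 2)) s = 0 := by
      rw [hev.deriv_eq]
      exact deriv_const s 0
    rw [hD.deriv] at h0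
    linarith
  have h3 : R s ^ 2 + μ ^ 2 = U s ^ 2 := by
    have := hRU s hs
    linarith
  have h4I : ∀ x ∈ I, R x * deriv R x = U x * deriv U x := by
    intro x hx
    have hev : (fun y => R y ^ 2 - U y ^ 2) =ᶠ[nhds x] (fun _ => -μ ^ 2) := by
      filter_upwards [hIopen.mem_nhds hx] with y hy
      have := hRU y hy
      linarith
    have hD : HasDerivAt (fun y => R y ^ 2 - U y ^ 2)
        (2 * R x * deriv R x - 2 * U x * deriv U x) x := by
      have h := ((hRd x hx).pow 2).sub ((hUd x hx).pow 2)
      exact h.congr_deriv (by push_cast; ring)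
    have h0 : deriv (fun y => R y ^ 2 - U y ^ 2) x = 0 := by
      rw [hev.deriv_eq]
      exact deriv_const x _
    rw [hD.deriv] at h0
    linarith
  have h5 : (deriv R s) ^ 2 + R s * deriv (deriv R) s
      = (deriv U s) ^ 2 + U s * deriv (deriv U) s := by
    have hev : (fun y => R y * deriv R y - U y * deriv U y) =ᶠ[nhds s] (fun _ => 0) := by
      filter_upwards [hIs] with y hy
      have := h4I y hy
      linarith
    have hD : HasDerivAt (fun y => R y * deriv R y - U y * deriv U y)
        ((deriv R s * deriv R s + R s * deriv (deriv R) s)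
          - (deriv U s * deriv U s + U s * deriv (deriv U) s)) s :=
      ((hRd s hs).mul (hR'd s hs)).sub ((hUd s hs).mul (hU'd s hs))
    have h0 : deriv (fun y => R y * deriv R y - U y * deriv U y) s = 0 := by
      rw [hev.deriv_eq]
      exact deriv_const s 0
    rw [hD.deriv] at h0
    nlinarith [h0]
  -- assemble
  have hXs := hpd1 s hs t
  have hXt := hpd2 s t
  have hXtt := hpd22 t
  have hXst := hpd12 t
  simp only [gauss, unitNormal]
  rw [hpd11, hXst, hXtt, hXs, hXt]
  exact key_alg μ (R s) (deriv R s) (deriv (deriv R) s) (deriv Λ s) (deriv (deriv Λ) s)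
    (deriv Θ s) (deriv (deriv Θ) s) (U s) (deriv U s) (deriv (deriv U) s)
    (Real.cos (t - Θ s)) (Real.sin (t - Θ s)) ha hu
    (Real.cos_sq_add_sin_sq (t - Θ s)) E1 (by linear_combination E2) (by linear_combination E3)
    h3 (h4I s hs) (by nlinarith [h5])
end
end

section
/- Let I ⊆ ℝ be an open interval, μ ∈ ℝ, and let R, Λ, Θ, U : I → ℝ be C² functions with R > 0, U > 0, R² = U² − μ², (R')² + (R²/(R² + μ²))·(Λ')² = 1, and Θ' = (μ/(R² + μ²))·Λ' on I. Define X(s,t) = (R(s)·cos(t − Θ(s)), R(s)·sin(t − Θ(s)), Λ(s) + μ·(t − Θ(s))), and assume X_s × X_t ≠ 0 on I × ℝ. Then X satisfies the K^{1/4}-translator equation K = n₃⁴ at every point of I × ℝ if and only if U''(s) = −U(s)·U'(s)⁴ for every s ∈ I. -/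
open Real

noncomputable section

private lemma hd_fst {I : Set ℝ} (hI : IsOpen I) {f : ℝ → ℝ} (hf : ContDiffOn ℝ 2 f I)
    {s : ℝ} (hs : s ∈ I) : HasDerivAt f (deriv f s) s :=
  ((hf.differentiableOn (by norm_num)).differentiableAt (hI.mem_nhds hs)).hasDerivAt

private lemma hd_snd {I : Set ℝ} (hI : IsOpen I) {f : ℝ → ℝ} (hf : ContDiffOn ℝ 2 f I)
    {s : ℝ} (hs : s ∈ I) : HasDerivAt (deriv f) (deriv (deriv f) s) s :=
  (((hf.deriv_of_isOpen hI (m := 1) (by norm_num)).differentiableOn (by norm_num)).differentiableAt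
    (hI.mem_nhds hs)).hasDerivAt

private lemma bour_key
    (I : Set ℝ) (hIopen : IsOpen I) (μ : ℝ)
    (R Λ Θ U : ℝ → ℝ)
    (hRC : ContDiffOn ℝ 2 R I) (hΛC : ContDiffOn ℝ 2 Λ I)
    (hΘC : ContDiffOn ℝ 2 Θ I) (hUC : ContDiffOn ℝ 2 U I)
    (hRpos : ∀ s ∈ I, 0 < R s) (hUpos : ∀ s ∈ I, 0 < U s)
    (hRU : ∀ s ∈ I, (R s) ^ 2 = (U s) ^ 2 - μ ^ 2)
    (hmetric : ∀ s ∈ I,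
      (deriv R s) ^ 2 + ((R s) ^ 2 / ((R s) ^ 2 + μ ^ 2)) * (deriv Λ s) ^ 2 = 1)
    (hΘ' : ∀ s ∈ I, deriv Θ s = (μ / ((R s) ^ 2 + μ ^ 2)) * deriv Λ s)
    (X : ℝ → ℝ → ℝ × ℝ × ℝ)
    (hX : ∀ s t, X s t =
      (R s * Real.cos (t - Θ s), R s * Real.sin (t - Θ s), Λ s + μ * (t - Θ s)))
    (s : ℝ) (hs : s ∈ I) (t : ℝ) :
    gauss X s t = -(deriv (deriv U) s) / U s ∧ angleFun X s t = deriv U s := by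
  have hu0 : 0 < U s := hUpos s hs
  have hr0 : 0 < R s := hRpos s hs
  have hne : ∀ x ∈ I, (R x) ^ 2 + μ ^ 2 ≠ 0 := by
    intro x hx
    have := hRpos x hx
    positivity
  -- first derivative of X in s, at any point of I
  have pd1X : ∀ u ∈ I, ∀ τ : ℝ, pd1 X u τ =
      (deriv R u * Real.cos (τ - Θ u) + R u * Real.sin (τ - Θ u) * deriv Θ u,
       deriv R u * Real.sin (τ - Θ u) - R u * Real.cos (τ - Θ u) * deriv Θ u,
       deriv Λ u - μ * deriv Θ u) := by
    intro u hu τ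
    have hRd := hd_fst hIopen hRC hu
    have hΘd := hd_fst hIopen hΘC hu
    have hΛd := hd_fst hIopen hΛC hu
    have hφ : HasDerivAt (fun x => τ - Θ x) (-(deriv Θ u)) u := by
      simpa using hΘd.const_sub τ
    have c1 : HasDerivAt (fun x => R x * Real.cos (τ - Θ x))
        (deriv R u * Real.cos (τ - Θ u) + R u * Real.sin (τ - Θ u) * deriv Θ u) u := by
      have := hRd.mul hφ.cos
      convert this using 1
      all_goals first | rfl | ring
    have c2 : HasDerivAt (fun x => R x * Real.sin (τ - Θ x))
        (deriv R u * Real.sin (τ - Θ u) - R u * Real.cos (τ - Θ u) * deriv Θ u) u := by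
      have := hRd.mul hφ.sin
      convert this using 1
      all_goals first | rfl | ring
    have c3 : HasDerivAt (fun x => Λ x + μ * (τ - Θ x))
        (deriv Λ u - μ * deriv Θ u) u := by
      have := hΛd.add (hφ.const_mul μ)
      convert this using 1
      all_goals first | rfl | ring
    have hfun : (fun x => X x τ) = fun x =>
        ((R x * Real.cos (τ - Θ x), R x * Real.sin (τ - Θ x), Λ x + μ * (τ - Θ x)) :
          ℝ × ℝ × ℝ) := funext fun x => hX x τ
    unfold pd1
    rw [hfun]
    exact (c1.prodMk (c2.prodMk c3)).deriv
  -- first derivative of X in t, everywhere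
  have pd2X : ∀ u τ : ℝ, pd2 X u τ =
      (-(R u * Real.sin (τ - Θ u)), R u * Real.cos (τ - Θ u), μ) := by
    intro u τ
    have hφ : HasDerivAt (fun v : ℝ => v - Θ u) 1 τ := (hasDerivAt_id τ).sub_const _
    have c1 : HasDerivAt (fun v => R u * Real.cos (v - Θ u))
        (-(R u * Real.sin (τ - Θ u))) τ := by
      have := hφ.cos.const_mul (R u)
      convert this using 1
      all_goals first | rfl | ring
    have c2 : HasDerivAt (fun v => R u * Real.sin (v - Θ u))
        (R u * Real.cos (τ - Θ u)) τ := by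
      have := hφ.sin.const_mul (R u)
      convert this using 1
      all_goals first | rfl | ring
    have c3 : HasDerivAt (fun v => Λ u + μ * (v - Θ u)) μ τ := by
      have := (hφ.const_mul μ).const_add (Λ u)
      convert this using 1
      all_goals first | rfl | ring
    have hfun : (fun v => X u v) = fun v =>
        ((R u * Real.cos (v - Θ u), R u * Real.sin (v - Θ u), Λ u + μ * (v - Θ u)) :
          ℝ × ℝ × ℝ) := funext fun v => hX u v
    unfold pd2
    rw [hfun]
    exact (c1.prodMk (c2.prodMk c3)).deriv
  -- second derivatives
  have hRd := hd_fst hIopen hRC hs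
  have hΘd := hd_fst hIopen hΘC hs
  have hΛd := hd_fst hIopen hΛC hs
  have hUd := hd_fst hIopen hUC hs
  have hRd2 := hd_snd hIopen hRC hs
  have hΘd2 := hd_snd hIopen hΘC hs
  have hΛd2 := hd_snd hIopen hΛC hs
  have hUd2 := hd_snd hIopen hUC hs
  have hφ : HasDerivAt (fun x => t - Θ x) (-(deriv Θ s)) s := by
    simpa using hΘd.const_sub t
  have hφt : HasDerivAt (fun v : ℝ => v - Θ s) 1 t := (hasDerivAt_id t).sub_const _
  have pd11eq : pd1 (pd1 X) s t =
      (deriv (deriv R) s * Real.cos (t - Θ s)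
          + 2 * deriv R s * Real.sin (t - Θ s) * deriv Θ s
          - R s * Real.cos (t - Θ s) * (deriv Θ s) ^ 2
          + R s * Real.sin (t - Θ s) * deriv (deriv Θ) s,
       deriv (deriv R) s * Real.sin (t - Θ s)
          - 2 * deriv R s * Real.cos (t - Θ s) * deriv Θ s
          - R s * Real.sin (t - Θ s) * (deriv Θ s) ^ 2
          - R s * Real.cos (t - Θ s) * deriv (deriv Θ) s,
       deriv (deriv Λ) s - μ * deriv (deriv Θ) s) := by
    have hev : (fun x => pd1 X x t) =ᶠ[nhds s] fun x =>
        ((deriv R x * Real.cos (t - Θ x) + R x * Real.sin (t - Θ x) * deriv Θ x,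
          deriv R x * Real.sin (t - Θ x) - R x * Real.cos (t - Θ x) * deriv Θ x,
          deriv Λ x - μ * deriv Θ x) : ℝ × ℝ × ℝ) := by
      filter_upwards [hIopen.mem_nhds hs] with x hx
      exact pd1X x hx t
    have c1 : HasDerivAt
        (fun x => deriv R x * Real.cos (t - Θ x) + R x * Real.sin (t - Θ x) * deriv Θ x)
        (deriv (deriv R) s * Real.cos (t - Θ s)
          + 2 * deriv R s * Real.sin (t - Θ s) * deriv Θ s
          - R s * Real.cos (t - Θ s) * (deriv Θ s) ^ 2
          + R s * Real.sin (t - Θ s) * deriv (deriv Θ) s) s := by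
      have := (hRd2.mul hφ.cos).add ((hRd.mul hφ.sin).mul hΘd2)
      convert this using 1
      all_goals first | rfl | (simp only [Pi.mul_apply]; ring) | ring
    have c2 : HasDerivAt
        (fun x => deriv R x * Real.sin (t - Θ x) - R x * Real.cos (t - Θ x) * deriv Θ x)
        (deriv (deriv R) s * Real.sin (t - Θ s)
          - 2 * deriv R s * Real.cos (t - Θ s) * deriv Θ s
          - R s * Real.sin (t - Θ s) * (deriv Θ s) ^ 2
          - R s * Real.cos (t - Θ s) * deriv (deriv Θ) s) s := by
      have := (hRd2.mul hφ.sin).sub ((hRd.mul hφ.cos).mul hΘd2)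
      convert this using 1
      all_goals first | rfl | (simp only [Pi.mul_apply]; ring) | ring
    have c3 : HasDerivAt (fun x => deriv Λ x - μ * deriv Θ x)
        (deriv (deriv Λ) s - μ * deriv (deriv Θ) s) s := hΛd2.sub (hΘd2.const_mul μ)
    rw [show pd1 (pd1 X) s t = deriv (fun x => pd1 X x t) s from rfl, hev.deriv_eq]
    exact (c1.prodMk (c2.prodMk c3)).deriv
  have pd21eq : pd2 (pd1 X) s t =
      (-(deriv R s * Real.sin (t - Θ s)) + R s * Real.cos (t - Θ s) * deriv Θ s,
       deriv R s * Real.cos (t - Θ s) + R s * Real.sin (t - Θ s) * deriv Θ s,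
       0) := by
    have hfun : (fun v => pd1 X s v) = fun v =>
        ((deriv R s * Real.cos (v - Θ s) + R s * Real.sin (v - Θ s) * deriv Θ s,
          deriv R s * Real.sin (v - Θ s) - R s * Real.cos (v - Θ s) * deriv Θ s,
          deriv Λ s - μ * deriv Θ s) : ℝ × ℝ × ℝ) := funext fun v => pd1X s hs v
    have c1 : HasDerivAt
        (fun v => deriv R s * Real.cos (v - Θ s) + R s * Real.sin (v - Θ s) * deriv Θ s)
        (-(deriv R s * Real.sin (t - Θ s)) + R s * Real.cos (t - Θ s) * deriv Θ s) t := by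
      have := (hφt.cos.const_mul (deriv R s)).add
        ((hφt.sin.const_mul (R s)).mul_const (deriv Θ s))
      convert this using 1
      all_goals first | rfl | ring
    have c2 : HasDerivAt
        (fun v => deriv R s * Real.sin (v - Θ s) - R s * Real.cos (v - Θ s) * deriv Θ s)
        (deriv R s * Real.cos (t - Θ s) + R s * Real.sin (t - Θ s) * deriv Θ s) t := by
      have := (hφt.sin.const_mul (deriv R s)).sub
        ((hφt.cos.const_mul (R s)).mul_const (deriv Θ s))
      convert this using 1
      all_goals first | rfl | ring
    have c3 : HasDerivAt (fun _ : ℝ => deriv Λ s - μ * deriv Θ s) 0 t :=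
      hasDerivAt_const _ _
    unfold pd2
    rw [hfun]
    exact (c1.prodMk (c2.prodMk c3)).deriv
  have pd22eq : pd2 (pd2 X) s t =
      (-(R s * Real.cos (t - Θ s)), -(R s * Real.sin (t - Θ s)), 0) := by
    have hfun : (fun v => pd2 X s v) = fun v =>
        ((-(R s * Real.sin (v - Θ s)), R s * Real.cos (v - Θ s), μ) : ℝ × ℝ × ℝ) :=
      funext fun v => pd2X s v
    have c1 : HasDerivAt (fun v => -(R s * Real.sin (v - Θ s)))
        (-(R s * Real.cos (t - Θ s))) t := by
      have := (hφt.sin.const_mul (R s)).neg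
      convert this using 1
      all_goals first | rfl | ring
    have c2 : HasDerivAt (fun v => R s * Real.cos (v - Θ s))
        (-(R s * Real.sin (t - Θ s))) t := by
      have := hφt.cos.const_mul (R s)
      convert this using 1
      all_goals first | rfl | ring
    have c3 : HasDerivAt (fun _ : ℝ => μ) 0 t := hasDerivAt_const _ _
    rw [show pd2 (pd2 X) s t = deriv (fun v => pd2 X s v) t from rfl, hfun]
    exact (c1.prodMk (c2.prodMk c3)).deriv
  -- scalar identities
  have h2 : R s ^ 2 + μ ^ 2 = U s ^ 2 := by
    have := hRU s hs
    linarith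
  have h3 : (deriv R s) ^ 2 * U s ^ 2 + R s ^ 2 * (deriv Λ s) ^ 2 = U s ^ 2 := by
    have hm := hmetric s hs
    have hne' := hne s hs
    field_simp at hm
    linear_combination hm + (1 - (deriv R s) ^ 2) * h2
  have h4 : deriv Θ s * U s ^ 2 = μ * deriv Λ s := by
    have hth := hΘ' s hs
    have hne' := hne s hs
    rw [hth, ← h2]
    field_simp
  have h5I : ∀ x ∈ I, U x * deriv U x = R x * deriv R x := by
    intro x hx
    have hUdx := hd_fst hIopen hUC hx
    have hRdx := hd_fst hIopen hRC hx
    have hev : (fun y => U y ^ 2) =ᶠ[nhds x] fun y => R y ^ 2 + μ ^ 2 := by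
      filter_upwards [hIopen.mem_nhds hx] with y hy
      have := hRU y hy
      linarith
    have hU2 : HasDerivAt (fun y => U y ^ 2) (2 * U x * deriv U x) x := by
      have := hUdx.pow 2
      convert this using 1
      all_goals first | rfl | ring
    have hR2 : HasDerivAt (fun y => R y ^ 2 + μ ^ 2) (2 * R x * deriv R x) x := by
      have := (hRdx.pow 2).add_const (μ ^ 2)
      convert this using 1
      all_goals first | rfl | ring
    have := (hR2.congr_of_eventuallyEq hev).unique hU2
    linarith
  have h5 : U s * deriv U s = R s * deriv R s := h5I s hs
  have h6 : (deriv R s) ^ 2 + R s * deriv (deriv R) s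
      = (deriv U s) ^ 2 + U s * deriv (deriv U) s := by
    have hev : (fun x => U x * deriv U x) =ᶠ[nhds s] fun x => R x * deriv R x := by
      filter_upwards [hIopen.mem_nhds hs] with x hx
      exact h5I x hx
    have hq : HasDerivAt (fun x => R x * deriv R x)
        (deriv R s * deriv R s + R s * deriv (deriv R) s) s := hRd.mul hRd2
    have hp : HasDerivAt (fun x => U x * deriv U x)
        (deriv U s * deriv U s + U s * deriv (deriv U) s) s := hUd.mul hUd2
    have := (hq.congr_of_eventuallyEq hev).unique hp
    linear_combination this
  have h7 : deriv R s * deriv (deriv R) s * U s ^ 4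
      + μ ^ 2 * R s * deriv R s * (deriv Λ s) ^ 2
      + R s ^ 2 * deriv Λ s * deriv (deriv Λ) s * U s ^ 2 = 0 := by
    have hne' := hne s hs
    have hev : (fun x => (deriv R x) ^ 2 + ((R x) ^ 2 / ((R x) ^ 2 + μ ^ 2)) * (deriv Λ x) ^ 2)
        =ᶠ[nhds s] fun _ => (1 : ℝ) := by
      filter_upwards [hIopen.mem_nhds hs] with x hx
      exact hmetric x hx
    have hm : HasDerivAt
        (fun x => (deriv R x) ^ 2 + ((R x) ^ 2 / ((R x) ^ 2 + μ ^ 2)) * (deriv Λ x) ^ 2)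
        (2 * deriv R s ^ 1 * deriv (deriv R) s
          + ((2 * R s ^ 1 * deriv R s * (R s ^ 2 + μ ^ 2)
              - R s ^ 2 * (2 * R s ^ 1 * deriv R s)) / (R s ^ 2 + μ ^ 2) ^ 2) * (deriv Λ s) ^ 2
          + (R s ^ 2 / (R s ^ 2 + μ ^ 2)) * (2 * deriv Λ s ^ 1 * deriv (deriv Λ) s)) s := by
      have hm0 := (hRd2.pow 2).add
        ((((hRd.pow 2).div ((hRd.pow 2).add_const (μ ^ 2)) hne').mul (hΛd2.pow 2)))
      convert hm0 using 1
      push_cast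
      all_goals first | rfl | (push_cast; simp only [Pi.pow_apply, Pi.div_apply]; ring)
    have hzero : HasDerivAt
        (fun x => (deriv R x) ^ 2 + ((R x) ^ 2 / ((R x) ^ 2 + μ ^ 2)) * (deriv Λ x) ^ 2)
        0 s := (hasDerivAt_const s (1 : ℝ)).congr_of_eventuallyEq hev
    have hD0 := hm.unique hzero
    have hD' : (2 * deriv R s ^ 1 * deriv (deriv R) s
          + ((2 * R s ^ 1 * deriv R s * (R s ^ 2 + μ ^ 2)
              - R s ^ 2 * (2 * R s ^ 1 * deriv R s)) / (R s ^ 2 + μ ^ 2) ^ 2) * (deriv Λ s) ^ 2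
          + (R s ^ 2 / (R s ^ 2 + μ ^ 2)) * (2 * deriv Λ s ^ 1 * deriv (deriv Λ) s))
            * (R s ^ 2 + μ ^ 2) ^ 2
        = (2 * deriv R s * deriv (deriv R) s) * (R s ^ 2 + μ ^ 2) ^ 2
          + 2 * μ ^ 2 * R s * deriv R s * (deriv Λ s) ^ 2
          + 2 * R s ^ 2 * deriv Λ s * deriv (deriv Λ) s * (R s ^ 2 + μ ^ 2) := by
      field_simp
      ring
    rw [hD0, zero_mul] at hD'
    linear_combination (-(1:ℝ)/2) * hD'
      + (-(deriv R s * deriv (deriv R) s) * (U s ^ 2 + R s ^ 2 + μ ^ 2)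
          - R s ^ 2 * deriv Λ s * deriv (deriv Λ) s) * h2
  have hpyth : Real.sin (t - Θ s) ^ 2 + Real.cos (t - Θ s) ^ 2 = 1 :=
    Real.sin_sq_add_cos_sq (t - Θ s)
  have pd1eq := pd1X s hs t
  have pd2eq := pd2X s t
  clear pd1X pd2X hφ hφt hRd hΘd hΛd hUd hRd2 hΘd2 hΛd2 hUd2
  set r := R s with hr
  set r1 := deriv R s with hr1
  set r2 := deriv (deriv R) s with hr2
  set l1 := deriv Λ s with hl1
  set l2 := deriv (deriv Λ) s with hl2
  set t1 := deriv Θ s with ht1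
  set t2 := deriv (deriv Θ) s with ht2
  set u := U s with hu
  set u1 := deriv U s with hu1
  set u2 := deriv (deriv U) s with hu2
  set c := Real.cos (t - Θ s) with hc
  set sn := Real.sin (t - Θ s) with hsn
  -- cross product
  have hcr : cross3 (pd1 X s t) (pd2 X s t)
      = (μ * r1 * sn - r * l1 * c, -(r * l1 * sn) - μ * r1 * c, r * r1) := by
    rw [pd1eq, pd2eq]
    simp only [cross3, Prod.mk.injEq]
    refine ⟨by ring, by ring, by linear_combination (r * r1) * hpyth⟩
  have hnn : dot3 (cross3 (pd1 X s t) (pd2 X s t)) (cross3 (pd1 X s t) (pd2 X s t))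
      = u ^ 2 := by
    rw [hcr]
    simp only [dot3]
    linear_combination (μ ^ 2 * r1 ^ 2 + r ^ 2 * l1 ^ 2) * hpyth + h3 + r1 ^ 2 * h2
  have hun : unitNormal X s t
      = u⁻¹ • ((μ * r1 * sn - r * l1 * c, -(r * l1 * sn) - μ * r1 * c, r * r1) : ℝ × ℝ × ℝ) := by
    unfold unitNormal
    rw [hnn, hcr, Real.sqrt_sq hu0.le]
  have hangle : angleFun X s t = u1 := by
    unfold angleFun
    rw [hun]
    simp only [dot3, e3, Prod.smul_mk, smul_eq_mul]
    field_simp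
    linear_combination -h5
  have hLdot : dot3 (pd1 (pd1 X) s t) (unitNormal X s t)
      = u⁻¹ * (-(r * r2 * l1) + 2 * μ * r1 ^ 2 * t1 + r ^ 2 * l1 * t1 ^ 2 + r * r1 * l2) := by
    rw [pd11eq, hun]
    simp only [dot3, Prod.smul_mk, smul_eq_mul]
    have key : (r2 * c + 2 * r1 * sn * t1 - r * c * t1 ^ 2 + r * sn * t2)
          * (μ * r1 * sn - r * l1 * c)
        + (r2 * sn - 2 * r1 * c * t1 - r * sn * t1 ^ 2 - r * c * t2)
          * (-(r * l1 * sn) - μ * r1 * c)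
        + (l2 - μ * t2) * (r * r1)
        = -(r * r2 * l1) + 2 * μ * r1 ^ 2 * t1 + r ^ 2 * l1 * t1 ^ 2 + r * r1 * l2 := by
      linear_combination (-(r * r2 * l1) + 2 * μ * r1 ^ 2 * t1 + r ^ 2 * l1 * t1 ^ 2
        + μ * r * r1 * t2) * hpyth
    linear_combination u⁻¹ * key
  have hMdot : dot3 (pd2 (pd1 X) s t) (unitNormal X s t)
      = u⁻¹ * (-(μ * r1 ^ 2) - r ^ 2 * l1 * t1) := by
    rw [pd21eq, hun]
    simp only [dot3, Prod.smul_mk, smul_eq_mul]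
    have key : (-(r1 * sn) + r * c * t1) * (μ * r1 * sn - r * l1 * c)
        + (r1 * c + r * sn * t1) * (-(r * l1 * sn) - μ * r1 * c)
        + 0 * (r * r1)
        = -(μ * r1 ^ 2) - r ^ 2 * l1 * t1 := by
      linear_combination (-(μ * r1 ^ 2) - r ^ 2 * l1 * t1) * hpyth
    linear_combination u⁻¹ * key
  have hNdot : dot3 (pd2 (pd2 X) s t) (unitNormal X s t) = u⁻¹ * (r ^ 2 * l1) := by
    rw [pd22eq, hun]
    simp only [dot3, Prod.smul_mk, smul_eq_mul]
    have key : (-(r * c)) * (μ * r1 * sn - r * l1 * c)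
        + (-(r * sn)) * (-(r * l1 * sn) - μ * r1 * c)
        + 0 * (r * r1) = r ^ 2 * l1 := by
      linear_combination (r ^ 2 * l1) * hpyth
    linear_combination u⁻¹ * key
  have hE : dot3 (pd1 X s t) (pd1 X s t) = 1 := by
    rw [pd1eq]
    simp only [dot3]
    refine mul_right_cancel₀ (pow_ne_zero 4 hu0.ne') ?_
    linear_combination (r1 ^ 2 + r ^ 2 * t1 ^ 2) * u ^ 4 * hpyth
      + r ^ 2 * (t1 * u ^ 2 + μ * l1) * h4
      + (-μ) * (2 * l1 * u ^ 2 - μ * t1 * u ^ 2 - μ ^ 2 * l1) * h4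
      + (-(l1 ^ 2)) * (u ^ 2 - μ ^ 2 + r ^ 2) * h2
      + u ^ 2 * h3 + r ^ 2 * l1 ^ 2 * h2
  have hF : dot3 (pd1 X s t) (pd2 X s t) = 0 := by
    rw [pd1eq, pd2eq]
    simp only [dot3]
    refine mul_right_cancel₀ (pow_ne_zero 2 hu0.ne') ?_
    linear_combination (-(r ^ 2) * t1 * u ^ 2) * hpyth + (-t1 * u ^ 2) * h2 + (-(u ^ 2)) * h4
  have hG : dot3 (pd2 X s t) (pd2 X s t) = u ^ 2 := by
    rw [pd2eq]
    simp only [dot3]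
    linear_combination r ^ 2 * hpyth + h2
  have hA : r * r2 * u ^ 2 + μ ^ 2 * r1 ^ 2 = u2 * u ^ 3 := by
    linear_combination u ^ 2 * h6 + r1 ^ 2 * h2 + (u * u1 + r * r1) * h5
  have hBig : (-(r * r2 * l1) + 2 * μ * r1 ^ 2 * t1 + r ^ 2 * l1 * t1 ^ 2 + r * r1 * l2)
        * (r ^ 2 * l1) - (-(μ * r1 ^ 2) - r ^ 2 * l1 * t1) ^ 2
      = -(u2 * u ^ 3) := by
    refine mul_right_cancel₀ (pow_ne_zero 2 hu0.ne') ?_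
    linear_combination r * r1 * h7 + (-(r * r2 * u ^ 2) - μ ^ 2 * r1 ^ 2) * h3
      + (-(u ^ 2)) * hA
  have hgauss : gauss X s t = -u2 / u := by
    unfold gauss
    rw [hLdot, hMdot, hNdot, hE, hF, hG]
    rw [show u⁻¹ * (-(r * r2 * l1) + 2 * μ * r1 ^ 2 * t1 + r ^ 2 * l1 * t1 ^ 2 + r * r1 * l2)
          * (u⁻¹ * (r ^ 2 * l1)) - (u⁻¹ * (-(μ * r1 ^ 2) - r ^ 2 * l1 * t1)) ^ 2
        = ((-(r * r2 * l1) + 2 * μ * r1 ^ 2 * t1 + r ^ 2 * l1 * t1 ^ 2 + r * r1 * l2)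
            * (r ^ 2 * l1) - (-(μ * r1 ^ 2) - r ^ 2 * l1 * t1) ^ 2) * (u⁻¹) ^ 2 from by ring,
      hBig]
    rw [eq_div_iff hu0.ne']
    field_simp
    ring
  exact ⟨hgauss, hangle⟩

/-- Bour's helicoidal patch satisfies the `K^{1/4}`-translator equation
`K = n₃⁴` at every point iff the Bour function satisfies the ODE `U'' = −U·(U')⁴` on `I`. -/
theorem bour_translator_iff_ODE
    (I : Set ℝ) (hIopen : IsOpen I) (hIconn : I.OrdConnected) (μ : ℝ)
    (R Λ Θ U : ℝ → ℝ)
    (hRC : ContDiffOn ℝ 2 R I) (hΛC : ContDiffOn ℝ 2 Λ I)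
    (hΘC : ContDiffOn ℝ 2 Θ I) (hUC : ContDiffOn ℝ 2 U I)
    (hRpos : ∀ s ∈ I, 0 < R s) (hUpos : ∀ s ∈ I, 0 < U s)
    (hRU : ∀ s ∈ I, (R s) ^ 2 = (U s) ^ 2 - μ ^ 2)
    (hmetric : ∀ s ∈ I,
      (deriv R s) ^ 2 + ((R s) ^ 2 / ((R s) ^ 2 + μ ^ 2)) * (deriv Λ s) ^ 2 = 1)
    (hΘ' : ∀ s ∈ I, deriv Θ s = (μ / ((R s) ^ 2 + μ ^ 2)) * deriv Λ s)
    (X : ℝ → ℝ → ℝ × ℝ × ℝ)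
    (hX : ∀ s t, X s t =
      (R s * Real.cos (t - Θ s), R s * Real.sin (t - Θ s), Λ s + μ * (t - Θ s)))
    (hcross : ∀ s ∈ I, ∀ t : ℝ, cross3 (pd1 X s t) (pd2 X s t) ≠ 0) :
    (∀ s ∈ I, ∀ t : ℝ, gauss X s t = (angleFun X s t) ^ 4) ↔
      (∀ s ∈ I, deriv (deriv U) s = -(U s) * (deriv U s) ^ 4) := by
  constructor
  · intro h s hs
    obtain ⟨hg, ha⟩ := bour_key I hIopen μ R Λ Θ U hRC hΛC hΘC hUC hRpos hUpos hRU
      hmetric hΘ' X hX s hs 0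
    have h0 := h s hs 0
    rw [hg, ha] at h0
    have hu0 : (0:ℝ) < U s := hUpos s hs
    rw [div_eq_iff hu0.ne'] at h0
    linarith [h0]
  · intro h s hs t
    obtain ⟨hg, ha⟩ := bour_key I hIopen μ R Λ Θ U hRC hΛC hΘC hUC hRpos hUpos hRU
      hmetric hΘ' X hX s hs t
    have hu0 : (0:ℝ) < U s := hUpos s hs
    rw [hg, ha, h s hs]
    field_simp
end
end

section
/- Let c ∈ ℝ and let I ⊆ (0, ∞) be an open interval on which U² + c − 1 > 0. Let Λ : I → ℝ be a C² function with Λ'(U) = √(U² + c − 1) for all U ∈ I. Define the rotational patch X(U,t) = (U·cos t, U·sin t, Λ(U)). Then for every (U,t) ∈ I × ℝ: the first fundamental form coefficients are E = U² + c, F = 0, G = U²; the squared angle function is n₃² = 1/(U² + c); and the Gaussian curvature is K = 1/(U² + c)². In particular K = n₃⁴, so X is a K^{1/4}-translator. -/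
open Real

noncomputable section

/-- The rotational patch `X(U,t) = (U cos t, U sin t, Λ(U))` with
`Λ' = √(U² + c − 1)` has `E = U² + c`, `F = 0`, `G = U²`, squared angle function
`n₃² = 1/(U² + c)`, Gaussian curvature `K = 1/(U² + c)²`, and hence `K = n₃⁴`:
it is a `K^{1/4}`-translator. -/
theorem rotational_translator
    (c : ℝ) (I : Set ℝ) (hIopen : IsOpen I) (hIconn : I.OrdConnected)
    (hIpos : I ⊆ Set.Ioi (0 : ℝ))
    (hc : ∀ U ∈ I, 0 < U ^ 2 + c - 1)
    (Λ : ℝ → ℝ) (hΛC : ContDiffOn ℝ 2 Λ I)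
    (hΛ' : ∀ U ∈ I, deriv Λ U = Real.sqrt (U ^ 2 + c - 1))
    (X : ℝ → ℝ → ℝ × ℝ × ℝ)
    (hX : ∀ U t, X U t = (U * Real.cos t, U * Real.sin t, Λ U)) :
    ∀ U ∈ I, ∀ t : ℝ,
      dot3 (pd1 X U t) (pd1 X U t) = U ^ 2 + c ∧
      dot3 (pd1 X U t) (pd2 X U t) = 0 ∧
      dot3 (pd2 X U t) (pd2 X U t) = U ^ 2 ∧
      (angleFun X U t) ^ 2 = 1 / (U ^ 2 + c) ∧
      gauss X U t = 1 / (U ^ 2 + c) ^ 2 ∧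
      gauss X U t = (angleFun X U t) ^ 4 := by
  intro U hU t
  have hU0 : (0:ℝ) < U := hIpos hU
  have h1 : 0 < U ^ 2 + c - 1 := hc U hU
  have h2 : 0 < U ^ 2 + c := by linarith
  set s1 := Real.sqrt (U ^ 2 + c - 1) with hs1def
  set s2 := Real.sqrt (U ^ 2 + c) with hs2def
  have hs1 : s1 ^ 2 = U ^ 2 + c - 1 := Real.sq_sqrt h1.le
  have hs2 : s2 ^ 2 = U ^ 2 + c := Real.sq_sqrt h2.le
  have hs1pos : 0 < s1 := Real.sqrt_pos.mpr h1
  have hs2pos : 0 < s2 := Real.sqrt_pos.mpr h2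
  -- Λ derivative
  have hΛdiff : ∀ u ∈ I, HasDerivAt Λ (Real.sqrt (u ^ 2 + c - 1)) u := by
    intro u hu
    have hd : DifferentiableAt ℝ Λ u :=
      (hΛC.contDiffAt (hIopen.mem_nhds hu)).differentiableAt (by norm_num)
    have := hd.hasDerivAt
    rwa [hΛ' u hu] at this
  -- first partials
  have hpd1 : ∀ u ∈ I, ∀ τ : ℝ,
      pd1 X u τ = (Real.cos τ, Real.sin τ, Real.sqrt (u ^ 2 + c - 1)) := by
    intro u hu τ
    have h : HasDerivAt (fun w => X w τ)
        (Real.cos τ, Real.sin τ, Real.sqrt (u ^ 2 + c - 1)) u := by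
      have hfe : (fun w => X w τ) = fun w => (w * Real.cos τ, w * Real.sin τ, Λ w) :=
        funext fun w => hX w τ
      rw [hfe]
      have h1' : HasDerivAt (fun w : ℝ => w * Real.cos τ) (Real.cos τ) u := by
        simpa using (hasDerivAt_id u).mul_const (Real.cos τ)
      have h2' : HasDerivAt (fun w : ℝ => w * Real.sin τ) (Real.sin τ) u := by
        simpa using (hasDerivAt_id u).mul_const (Real.sin τ)
      exact h1'.prodMk (h2'.prodMk (hΛdiff u hu))
    simpa [pd1] using h.deriv
  have hpd2 : ∀ (u τ : ℝ),
      pd2 X u τ = (-(u * Real.sin τ), u * Real.cos τ, 0) := by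
    intro u τ
    have h : HasDerivAt (fun v => X u v) (-(u * Real.sin τ), u * Real.cos τ, 0) τ := by
      have hfe : (fun v => X u v) = fun v => (u * Real.cos v, u * Real.sin v, Λ u) :=
        funext fun v => hX u v
      rw [hfe]
      have h1' : HasDerivAt (fun v : ℝ => u * Real.cos v) (-(u * Real.sin τ)) τ := by
        simpa [mul_comm, mul_neg] using (Real.hasDerivAt_cos τ).const_mul u
      have h2' : HasDerivAt (fun v : ℝ => u * Real.sin v) (u * Real.cos τ) τ := by
        simpa using (Real.hasDerivAt_sin τ).const_mul u
      exact h1'.prodMk (h2'.prodMk (hasDerivAt_const τ (Λ u)))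
    simpa [pd2] using h.deriv
  -- second partials
  have hpd11 : pd1 (pd1 X) U t = (0, 0, U / s1) := by
    have hev : (fun u => pd1 X u t) =ᶠ[nhds U]
        (fun u => ((Real.cos t, Real.sin t, Real.sqrt (u ^ 2 + c - 1)) : ℝ × ℝ × ℝ)) := by
      filter_upwards [hIopen.mem_nhds hU] with u hu using hpd1 u hu t
    have hin : HasDerivAt (fun u : ℝ => u ^ 2 + c - 1) (2 * U) U := by
      simpa using ((hasDerivAt_pow 2 U).add_const c).sub_const 1
    have hsq : HasDerivAt (fun u : ℝ => Real.sqrt (u ^ 2 + c - 1)) (U / s1) U := by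
      have := (Real.hasDerivAt_sqrt h1.ne').comp U hin
      refine this.congr_deriv ?_
      rw [← hs1def]
      field_simp
    have hd : HasDerivAt
        (fun u : ℝ => ((Real.cos t, Real.sin t, Real.sqrt (u ^ 2 + c - 1)) : ℝ × ℝ × ℝ))
        ((0 : ℝ), (0 : ℝ), U / s1) U :=
      (hasDerivAt_const U _).prodMk ((hasDerivAt_const U _).prodMk hsq)
    have : pd1 (pd1 X) U t = deriv (fun u => pd1 X u t) U := rfl
    rw [this, hev.deriv_eq, hd.deriv]
  have hpd12 : pd2 (pd1 X) U t = (-Real.sin t, Real.cos t, 0) := by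
    have hfe : (fun v => pd1 X U v)
        = fun v => ((Real.cos v, Real.sin v, s1) : ℝ × ℝ × ℝ) :=
      funext fun v => hpd1 U hU v
    have hd : HasDerivAt (fun v : ℝ => ((Real.cos v, Real.sin v, s1) : ℝ × ℝ × ℝ))
        (-Real.sin t, Real.cos t, 0) t :=
      (Real.hasDerivAt_cos t).prodMk ((Real.hasDerivAt_sin t).prodMk (hasDerivAt_const t s1))
    have : pd2 (pd1 X) U t = deriv (fun v => pd1 X U v) t := rfl
    rw [this, hfe, hd.deriv]
  have hpd22 : pd2 (pd2 X) U t = (-(U * Real.cos t), -(U * Real.sin t), 0) := by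
    have hfe : (fun v => pd2 X U v)
        = fun v => ((-(U * Real.sin v), U * Real.cos v, 0) : ℝ × ℝ × ℝ) :=
      funext fun v => hpd2 U v
    have hd : HasDerivAt (fun v : ℝ => ((-(U * Real.sin v), U * Real.cos v, 0) : ℝ × ℝ × ℝ))
        (-(U * Real.cos t), -(U * Real.sin t), 0) t := by
      have h1' : HasDerivAt (fun v : ℝ => -(U * Real.sin v)) (-(U * Real.cos t)) t := by
        exact ((Real.hasDerivAt_sin t).const_mul U).neg
      have h2' : HasDerivAt (fun v : ℝ => U * Real.cos v) (-(U * Real.sin t)) t := by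
        simpa [mul_comm, mul_neg] using (Real.hasDerivAt_cos t).const_mul U
      exact h1'.prodMk (h2'.prodMk (hasDerivAt_const t 0))
    have : pd2 (pd2 X) U t = deriv (fun v => pd2 X U v) t := rfl
    rw [this, hfe, hd.deriv]
  have hXs := hpd1 U hU t
  have hXt := hpd2 U t
  rw [← hs1def] at hXs
  -- cross product
  have hcross : cross3 (pd1 X U t) (pd2 X U t)
      = (-(s1 * (U * Real.cos t)), -(s1 * (U * Real.sin t)), U) := by
    rw [hXs, hXt]
    simp only [cross3, Prod.mk.injEq]
    refine ⟨by ring, by ring, ?_⟩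
    linear_combination U * (Real.sin_sq_add_cos_sq t)
  have hnorm : Real.sqrt (dot3 (cross3 (pd1 X U t) (pd2 X U t))
      (cross3 (pd1 X U t) (pd2 X U t))) = U * s2 := by
    have hdc : dot3 (cross3 (pd1 X U t) (pd2 X U t)) (cross3 (pd1 X U t) (pd2 X U t))
        = (U * s2) ^ 2 := by
      rw [hcross]
      simp only [dot3]
      linear_combination (U ^ 2 * (Real.cos t) ^ 2 + U ^ 2 * (Real.sin t) ^ 2) * hs1
        + (U ^ 2 * (U ^ 2 + c - 1)) * Real.sin_sq_add_cos_sq t - U ^ 2 * hs2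
    rw [hdc, Real.sqrt_sq (by positivity)]
  have hn : unitNormal X U t
      = (U * s2)⁻¹ • (-(s1 * (U * Real.cos t)), -(s1 * (U * Real.sin t)), U) := by
    rw [unitNormal, hnorm, hcross]
  have hang : angleFun X U t = s2⁻¹ := by
    rw [angleFun, hn]
    simp only [dot3, e3, Prod.smul_fst, Prod.smul_snd, smul_eq_mul]
    field_simp
    ring
  have hE : dot3 (pd1 X U t) (pd1 X U t) = U ^ 2 + c := by
    rw [hXs]; simp only [dot3]
    linear_combination hs1 + Real.sin_sq_add_cos_sq t
  have hF : dot3 (pd1 X U t) (pd2 X U t) = 0 := by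
    rw [hXs, hXt]; simp only [dot3]; ring
  have hG : dot3 (pd2 X U t) (pd2 X U t) = U ^ 2 := by
    rw [hXt]; simp only [dot3]
    linear_combination U ^ 2 * Real.sin_sq_add_cos_sq t
  have hang2 : (angleFun X U t) ^ 2 = 1 / (U ^ 2 + c) := by
    rw [hang, ← hs2]
    field_simp
  have hL : dot3 (pd1 (pd1 X) U t) (unitNormal X U t) = U / (s1 * s2) := by
    rw [hpd11, hn]
    simp only [dot3, Prod.smul_fst, Prod.smul_snd, smul_eq_mul]
    field_simp
    ring
  have hM : dot3 (pd2 (pd1 X) U t) (unitNormal X U t) = 0 := by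
    rw [hpd12, hn]
    simp only [dot3, Prod.smul_fst, Prod.smul_snd, smul_eq_mul]
    ring
  have hN : dot3 (pd2 (pd2 X) U t) (unitNormal X U t) = s1 * U / s2 := by
    rw [hpd22, hn]
    simp only [dot3, Prod.smul_fst, Prod.smul_snd, smul_eq_mul]
    have hUs2 : U * s2 ≠ 0 := by positivity
    field_simp
    linear_combination (U * s1) * Real.sin_sq_add_cos_sq t
  have hK : gauss X U t = 1 / (U ^ 2 + c) ^ 2 := by
    rw [gauss, hL, hM, hN, hE, hF, hG, ← hs2]
    field_simp
    ring
  refine ⟨hE, hF, hG, hang2, hK, ?_⟩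
  rw [hK, hang, ← hs2]
  field_simp
end
end

section
/- Let h, c ∈ ℝ and let I ⊆ (0, ∞) be an open interval on which U² − h² > 0, U² + c > 0, and P(U) := U⁴ + (c − 1 − h²)·U² − h²·c ≥ 0. Let R, Λ, Θ : I → ℝ be C¹ functions with R(U) = √(U² − h²), Λ'(U) = (U/(U² − h²))·√(P(U)), and Θ'(U) = (h/U²)·Λ'(U). Define the helicoidal patch X(U,t) = (R(U)·cos(t − Θ(U)), R(U)·sin(t − Θ(U)), Λ(U) + h·(t − Θ(U))). Then for every (U,t) ∈ I × ℝ the first fundamental form coefficients are E = U² + c, F = 0, and G = U²; i.e., the induced metric is (U² + c) dU² + U² dt². -/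
open Real

noncomputable section

/-- The helicoidal patch `H^h_c` in geometric coordinates `(U,t)` has
induced metric `(U² + c) dU² + U² dt²`, i.e. `E = U² + c`, `F = 0`, `G = U²`. -/
theorem helicoidal_metric
    (h c : ℝ) (I : Set ℝ) (hIopen : IsOpen I) (hIconn : I.OrdConnected)
    (hIpos : I ⊆ Set.Ioi (0 : ℝ))
    (hUh : ∀ U ∈ I, 0 < U ^ 2 - h ^ 2)
    (hUc : ∀ U ∈ I, 0 < U ^ 2 + c)
    (hP : ∀ U ∈ I, 0 ≤ U ^ 4 + (c - 1 - h ^ 2) * U ^ 2 - h ^ 2 * c)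
    (R Λ Θ : ℝ → ℝ)
    (hRC : ContDiffOn ℝ 1 R I) (hΛC : ContDiffOn ℝ 1 Λ I) (hΘC : ContDiffOn ℝ 1 Θ I)
    (hR : ∀ U ∈ I, R U = Real.sqrt (U ^ 2 - h ^ 2))
    (hΛ' : ∀ U ∈ I, deriv Λ U =
      (U / (U ^ 2 - h ^ 2)) * Real.sqrt (U ^ 4 + (c - 1 - h ^ 2) * U ^ 2 - h ^ 2 * c))
    (hΘ' : ∀ U ∈ I, deriv Θ U = (h / U ^ 2) * deriv Λ U)
    (X : ℝ → ℝ → ℝ × ℝ × ℝ)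
    (hX : ∀ U t, X U t =
      (R U * Real.cos (t - Θ U), R U * Real.sin (t - Θ U), Λ U + h * (t - Θ U))) :
    ∀ U ∈ I, ∀ t : ℝ,
      dot3 (pd1 X U t) (pd1 X U t) = U ^ 2 + c ∧
      dot3 (pd1 X U t) (pd2 X U t) = 0 ∧
      dot3 (pd2 X U t) (pd2 X U t) = U ^ 2 := by
  intro U hU t
  have hU0 : 0 < U := hIpos hU
  have hUne : U ≠ 0 := ne_of_gt hU0
  have hrpos : 0 < U ^ 2 - h ^ 2 := hUh U hU
  have hrne : U ^ 2 - h ^ 2 ≠ 0 := ne_of_gt hrpos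
  set rr := Real.sqrt (U ^ 2 - h ^ 2) with hrrdef
  set pp := Real.sqrt (U ^ 4 + (c - 1 - h ^ 2) * U ^ 2 - h ^ 2 * c) with hppdef
  have hr0 : 0 < rr := Real.sqrt_pos.2 hrpos
  have hr2 : rr ^ 2 = U ^ 2 - h ^ 2 := Real.sq_sqrt hrpos.le
  have hp2 : pp ^ 2 = U ^ 4 + (c - 1 - h ^ 2) * U ^ 2 - h ^ 2 * c := Real.sq_sqrt (hP U hU)
  have hmem : I ∈ nhds U := hIopen.mem_nhds hU
  have hΛd : HasDerivAt Λ (deriv Λ U) U :=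
    ((hΛC.differentiableOn one_ne_zero).differentiableAt hmem).hasDerivAt
  have hΘd : HasDerivAt Θ (deriv Θ U) U :=
    ((hΘC.differentiableOn one_ne_zero).differentiableAt hmem).hasDerivAt
  have hL : deriv Λ U = U / (U ^ 2 - h ^ 2) * pp := hΛ' U hU
  have hw : deriv Θ U = h / U ^ 2 * deriv Λ U := hΘ' U hU
  have hRU : R U = rr := hR U hU
  have hsq : HasDerivAt (fun u : ℝ => u ^ 2 - h ^ 2) (2 * U) U := by
    simpa using (hasDerivAt_pow 2 U).sub_const (h ^ 2)
  have hRd : HasDerivAt R (U / rr) U := by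
    have heq : R =ᶠ[nhds U] fun u => Real.sqrt (u ^ 2 - h ^ 2) := by
      filter_upwards [hmem] with u hu using hR u hu
    have h2 : 2 * U / (2 * rr) = U / rr := mul_div_mul_left _ _ two_ne_zero
    exact h2 ▸ ((hsq.sqrt hrne).congr_of_eventuallyEq heq)
  have efun1 : (fun u => X u t) = fun u =>
      (R u * Real.cos (t - Θ u), R u * Real.sin (t - Θ u), Λ u + h * (t - Θ u)) :=
    funext fun u => hX u t
  have hang : HasDerivAt (fun u => t - Θ u) (-(deriv Θ U)) U := hΘd.const_sub t
  have h1 := hRd.mul hang.cos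
  have h2 := hRd.mul hang.sin
  have h3 := hΛd.add (hang.const_mul h)
  have hpd1 : deriv (fun u => (R u * Real.cos (t - Θ u), R u * Real.sin (t - Θ u),
      Λ u + h * (t - Θ u))) U = _ := (h1.prodMk (h2.prodMk h3)).deriv
  have efun2 : (fun v => X U v) = fun v =>
      (R U * Real.cos (v - Θ U), R U * Real.sin (v - Θ U), Λ U + h * (v - Θ U)) :=
    funext fun v => hX U v
  have hv : HasDerivAt (fun v : ℝ => v - Θ U) 1 t := (hasDerivAt_id t).sub_const _
  have g1 := hv.cos.const_mul (R U)
  have g2 := hv.sin.const_mul (R U)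
  have g3 := (hv.const_mul h).const_add (Λ U)
  have hpd2 := (g1.prodMk (g2.prodMk g3)).deriv
  have htrig := Real.sin_sq_add_cos_sq (t - Θ U)
  simp only [pd1, pd2, efun1, efun2, hpd1, hpd2, dot3]
  rw [hRU]
  refine ⟨?_, ?_, ?_⟩
  · have key : (U / rr) ^ 2 + rr ^ 2 * (deriv Θ U) ^ 2
        + (deriv Λ U - h * deriv Θ U) ^ 2 = U ^ 2 + c := by
      rw [div_pow, hr2, hw, hL]
      have e1 : (U ^ 2 + pp ^ 2) / (U ^ 2 - h ^ 2) = U ^ 2 + c := by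
        rw [hp2]; field_simp; ring
      calc U ^ 2 / (U ^ 2 - h ^ 2)
            + (U ^ 2 - h ^ 2) * (h / U ^ 2 * (U / (U ^ 2 - h ^ 2) * pp)) ^ 2
            + (U / (U ^ 2 - h ^ 2) * pp - h * (h / U ^ 2 * (U / (U ^ 2 - h ^ 2) * pp))) ^ 2
          = (U ^ 2 + pp ^ 2) / (U ^ 2 - h ^ 2) := by field_simp; ring
        _ = U ^ 2 + c := e1
    linear_combination ((U / rr) ^ 2 + rr ^ 2 * (deriv Θ U) ^ 2) * htrig + key
  · have keyF : -(rr ^ 2 * deriv Θ U) + h * deriv Λ U - h ^ 2 * deriv Θ U = 0 := by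
      rw [hr2, hw, hL]; field_simp; ring
    linear_combination (-(rr ^ 2 * deriv Θ U)) * htrig + keyF
  · linear_combination rr ^ 2 * htrig + hr2
end
end

section
/- Let h, c ∈ ℝ and let I ⊆ (0, ∞) be an open interval on which U² − h² > 0, U² + c > 0, and P(U) := U⁴ + (c − 1 − h²)·U² − h²·c ≥ 0. Let R, Λ, Θ : I → ℝ be C¹ functions with R(U) = √(U² − h²), Λ'(U) = (U/(U² − h²))·√(P(U)), and Θ'(U) = (h/U²)·Λ'(U). Define X(U,t) = (R(U)·cos(t − Θ(U)), R(U)·sin(t − Θ(U)), Λ(U) + h·(t − Θ(U))). Then at every point of I × ℝ the squared angle function equals 1/(U² + c), i.e., ((X_U × X_t)·e₃)² = ‖X_U × X_t‖²/(U² + c). -/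
open Real

noncomputable section

/-- On the helicoidal patch `H^h_c` the squared angle function equals
`1/(U² + c)`, i.e. `((X_U × X_t)·e₃)² = ‖X_U × X_t‖²/(U² + c)`. -/
theorem helicoidal_angle_function
    (h c : ℝ) (I : Set ℝ) (hIopen : IsOpen I) (hIconn : I.OrdConnected)
    (hIpos : I ⊆ Set.Ioi (0 : ℝ))
    (hUh : ∀ U ∈ I, 0 < U ^ 2 - h ^ 2)
    (hUc : ∀ U ∈ I, 0 < U ^ 2 + c)
    (hP : ∀ U ∈ I, 0 ≤ U ^ 4 + (c - 1 - h ^ 2) * U ^ 2 - h ^ 2 * c)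
    (R Λ Θ : ℝ → ℝ)
    (hRC : ContDiffOn ℝ 1 R I) (hΛC : ContDiffOn ℝ 1 Λ I) (hΘC : ContDiffOn ℝ 1 Θ I)
    (hR : ∀ U ∈ I, R U = Real.sqrt (U ^ 2 - h ^ 2))
    (hΛ' : ∀ U ∈ I, deriv Λ U =
      (U / (U ^ 2 - h ^ 2)) * Real.sqrt (U ^ 4 + (c - 1 - h ^ 2) * U ^ 2 - h ^ 2 * c))
    (hΘ' : ∀ U ∈ I, deriv Θ U = (h / U ^ 2) * deriv Λ U)
    (X : ℝ → ℝ → ℝ × ℝ × ℝ)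
    (hX : ∀ U t, X U t =
      (R U * Real.cos (t - Θ U), R U * Real.sin (t - Θ U), Λ U + h * (t - Θ U))) :
    ∀ U ∈ I, ∀ t : ℝ,
      (angleFun X U t) ^ 2 = 1 / (U ^ 2 + c) ∧
      (dot3 (cross3 (pd1 X U t) (pd2 X U t)) e3) ^ 2 =
        dot3 (cross3 (pd1 X U t) (pd2 X U t)) (cross3 (pd1 X U t) (pd2 X U t))
          / (U ^ 2 + c) := by
  intro U hU t
  have hmem : I ∈ nhds U := hIopen.mem_nhds hU
  have hU0 : (0:ℝ) < U := hIpos hU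
  have hq2 : 0 < U ^ 2 - h ^ 2 := hUh U hU
  have hc2 : 0 < U ^ 2 + c := hUc U hU
  have hP0 : 0 ≤ U ^ 4 + (c - 1 - h ^ 2) * U ^ 2 - h ^ 2 * c := hP U hU
  set q := Real.sqrt (U ^ 2 - h ^ 2) with hqdef
  have hq : 0 < q := Real.sqrt_pos.mpr hq2
  have hqsq : q ^ 2 = U ^ 2 - h ^ 2 := Real.sq_sqrt hq2.le
  set p := Real.sqrt (U ^ 4 + (c - 1 - h ^ 2) * U ^ 2 - h ^ 2 * c) with hpdef
  have hpsq : p ^ 2 = U ^ 4 + (c - 1 - h ^ 2) * U ^ 2 - h ^ 2 * c := Real.sq_sqrt hP0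
  set L := deriv Λ U with hLdef
  set T := deriv Θ U with hTdef
  have hLval : L = (U / (U ^ 2 - h ^ 2)) * p := hΛ' U hU
  have hTval : T = (h / U ^ 2) * L := hΘ' U hU
  have hRU : R U = q := hR U hU
  set cθ := Real.cos (t - Θ U) with hcθ
  set sθ := Real.sin (t - Θ U) with hsθ
  have htrig : sθ ^ 2 + cθ ^ 2 = 1 := Real.sin_sq_add_cos_sq _
  -- derivative of R
  have hRder : HasDerivAt R (U / q) U := by
    have h1 : HasDerivAt (fun u : ℝ => u ^ 2 - h ^ 2) (2 * U) U := by
      simpa using ((hasDerivAt_pow 2 U).sub_const (h ^ 2))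
    have h2 : HasDerivAt (fun u : ℝ => Real.sqrt (u ^ 2 - h ^ 2))
        (1 / (2 * q) * (2 * U)) U := (Real.hasDerivAt_sqrt hq2.ne').comp U h1
    have heq : R =ᶠ[nhds U] fun u => Real.sqrt (u ^ 2 - h ^ 2) :=
      Filter.eventuallyEq_of_mem hmem hR
    have h3 : HasDerivAt R (1 / (2 * q) * (2 * U)) U := h2.congr_of_eventuallyEq heq
    convert h3 using 1
    field_simp
  have hΛder : HasDerivAt Λ L U :=
    ((hΛC.differentiableOn one_ne_zero).differentiableAt hmem).hasDerivAt
  have hΘder : HasDerivAt Θ T U :=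
    ((hΘC.differentiableOn one_ne_zero).differentiableAt hmem).hasDerivAt
  -- pd1
  have hXfun : (fun u => X u t) =
      fun u => (R u * Real.cos (t - Θ u), R u * Real.sin (t - Θ u),
        Λ u + h * (t - Θ u)) := funext fun u => hX u t
  have hsub : HasDerivAt (fun u => t - Θ u) (-T) U := hΘder.const_sub t
  have hcosd : HasDerivAt (fun u => Real.cos (t - Θ u)) (sθ * T) U := by
    have := (Real.hasDerivAt_cos (t - Θ U)).comp U hsub
    refine this.congr_deriv ?_
    simp [hsθ]
  have hsind : HasDerivAt (fun u => Real.sin (t - Θ u)) (-(cθ * T)) U := by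
    have := (Real.hasDerivAt_sin (t - Θ U)).comp U hsub
    refine this.congr_deriv ?_
    simp [hcθ]
  have h1 : HasDerivAt (fun u => R u * Real.cos (t - Θ u))
      (U / q * cθ + q * (sθ * T)) U := by
    have := hRder.mul hcosd
    rwa [hRU] at this
  have h2 : HasDerivAt (fun u => R u * Real.sin (t - Θ u))
      (U / q * sθ - q * (cθ * T)) U := by
    have := hRder.mul hsind
    rw [hRU] at this
    refine this.congr_deriv ?_
    ring
  have h3 : HasDerivAt (fun u => Λ u + h * (t - Θ u)) (L - h * T) U := by
    have := hΛder.add ((hsub.const_mul h))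
    refine this.congr_deriv ?_
    ring
  have hpd1 : pd1 X U t = (U / q * cθ + q * (sθ * T),
      U / q * sθ - q * (cθ * T), L - h * T) := by
    rw [pd1, hXfun]
    exact (h1.prodMk (h2.prodMk h3)).deriv
  -- pd2
  have hYfun : (fun v => X U v) =
      fun v => (R U * Real.cos (v - Θ U), R U * Real.sin (v - Θ U),
        Λ U + h * (v - Θ U)) := funext fun v => hX U v
  have hsub2 : HasDerivAt (fun v : ℝ => v - Θ U) 1 t := (hasDerivAt_id t).sub_const _
  have k1 : HasDerivAt (fun v => R U * Real.cos (v - Θ U)) (-(q * sθ)) t := by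
    have := (((Real.hasDerivAt_cos (t - Θ U)).comp t hsub2).const_mul (R U))
    refine this.congr_deriv ?_
    rw [hsθ, hRU]
    ring
  have k2 : HasDerivAt (fun v => R U * Real.sin (v - Θ U)) (q * cθ) t := by
    have := (((Real.hasDerivAt_sin (t - Θ U)).comp t hsub2).const_mul (R U))
    refine this.congr_deriv ?_
    rw [hcθ, hRU]
    ring
  have k3 : HasDerivAt (fun v => Λ U + h * (v - Θ U)) h t := by
    have := ((hsub2.const_mul h).const_add (Λ U))
    refine this.congr_deriv ?_
    ring
  have hpd2 : pd2 X U t = (-(q * sθ), q * cθ, h) := by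
    rw [pd2, hYfun]
    exact (k1.prodMk (k2.prodMk k3)).deriv
  -- algebra
  have hqr : q * (U / q) = U := by field_simp
  have hc3 : cross3 (pd1 X U t) (pd2 X U t) =
      (h * (U / q) * sθ - L * q * cθ, -(L * q * sθ) - h * (U / q) * cθ, U) := by
    rw [hpd1, hpd2]
    simp only [cross3]
    refine Prod.ext ?_ (Prod.ext ?_ ?_) <;> simp only
    · ring
    · ring
    · linear_combination q * (U / q) * htrig + hqr
  have hd3 : h ^ 2 * (U / q) ^ 2 + L ^ 2 * q ^ 2 + U ^ 2 = U ^ 2 * (U ^ 2 + c) := by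
    rw [hLval, div_pow, hqsq, mul_pow, div_pow, hpsq]
    field_simp
    ring
  have hd : dot3 (cross3 (pd1 X U t) (pd2 X U t)) (cross3 (pd1 X U t) (pd2 X U t))
      = U ^ 2 * (U ^ 2 + c) := by
    rw [hc3]
    simp only [dot3]
    linear_combination (h ^ 2 * (U / q) ^ 2 + L ^ 2 * q ^ 2) * htrig + hd3
  have hzcomp : (cross3 (pd1 X U t) (pd2 X U t)).2.2 = U := by rw [hc3]
  have hsecond : (dot3 (cross3 (pd1 X U t) (pd2 X U t)) e3) ^ 2 =
      dot3 (cross3 (pd1 X U t) (pd2 X U t)) (cross3 (pd1 X U t) (pd2 X U t))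
        / (U ^ 2 + c) := by
    rw [hd]
    have he : dot3 (cross3 (pd1 X U t) (pd2 X U t)) e3
        = (cross3 (pd1 X U t) (pd2 X U t)).2.2 := by
      simp [dot3, e3]
    rw [he, hzcomp]
    field_simp
  refine ⟨?_, hsecond⟩
  have hdpos : (0:ℝ) < U ^ 2 * (U ^ 2 + c) := by positivity
  have hang : angleFun X U t = (Real.sqrt (U ^ 2 * (U ^ 2 + c)))⁻¹ * U := by
    rw [angleFun, unitNormal, hd]
    simp [dot3, e3, hzcomp]
  rw [hang, mul_pow, ← Real.sqrt_inv, Real.sq_sqrt (by positivity)]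
  field_simp
end
end

section
/- Let I ⊆ ℝ be an open interval and U : I → ℝ a C² function with U > 0 satisfying the translator ODE U''(s) = −U(s)·U'(s)⁴ on I. Let h ∈ ℝ and assume U(s)² − h² > 0 and U(s)²·(1 − U'(s)²) − h² > 0 on I. Let R_h, Λ_h, Θ_h : I → ℝ be C² functions with R_h = √(U² − h²), Λ_h'(s) = (U(s)/(U(s)² − h²))·√( U(s)²·(1 − U'(s)²) − h² ), and Θ_h'(s) = (h/U(s)²)·Λ_h'(s). Define the helicoidal patch X^h(s,t) = (R_h(s)·cos(t − Θ_h(s)), R_h(s)·sin(t − Θ_h(s)), Λ_h(s) + h·(t − Θ_h(s))). Then X^h satisfies K = n₃⁴ at every point of I × ℝ; that is, every member of the Bour family of isometric helicoidal surfaces of pitch h built from a K^{1/4}-translator Bour function U is again a K^{1/4}-translator. -/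
open Real

noncomputable section

set_option linter.unreachableTactic false
set_option linter.unusedVariables false
set_option linter.unusedTactic false
set_option linter.unnecessarySeqFocus false
set_option maxRecDepth 8000


set_option maxHeartbeats 1000000 in
lemma bour_NN (u u1 h r W c si : ℝ) (hu0 : u ≠ 0) (hr0 : r ≠ 0) (hW0 : W ≠ 0)
    (hUh0 : u^2 - h^2 ≠ 0) (hr2eq : r^2 = u^2 - h^2)
    (hW2eq : W^2 = u^2*(1-u1^2) - h^2) (hcs : si^2 + c^2 = 1) :
    ((u * u1 / r * si - r * (h / u ^ 2 * (u / (u ^ 2 - h ^ 2) * W)) * c) * h - (u / (u ^ 2 - h ^ 2) * W - h * (h / u ^ 2 * (u / (u ^ 2 - h ^ 2) * W))) * (r * c)) * ((u * u1 / r * si - r * (h / u ^ 2 * (u / (u ^ 2 - h ^ 2) * W)) * c) * h - (u / (u ^ 2 - h ^ 2) * W - h * (h / u ^ 2 * (u / (u ^ 2 - h ^ 2) * W))) * (r * c)) + ((u / (u ^ 2 - h ^ 2) * W - h * (h / u ^ 2 * (u / (u ^ 2 - h ^ 2) * W))) * -(r * si) - (u * u1 / r * c + r * (h / u ^ 2 *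 (u / (u ^ 2 - h ^ 2) * W)) * si) * h) * ((u / (u ^ 2 - h ^ 2) * W - h * (h / u ^ 2 * (u / (u ^ 2 - h ^ 2) * W))) * -(r * si) - (u * u1 / r * c + r * (h / u ^ 2 * (u / (u ^ 2 - h ^ 2) * W)) * si) * h) + ((u * u1 / r * c + r * (h / u ^ 2 * (u / (u ^ 2 - h ^ 2) * W)) * si) * (r * c) - (u * u1 / r * si - r * (h / u ^ 2 * (u / (u ^ 2 - h ^ 2) * W)) * c) * -(r * si)) * ((u * u1 / r * c + r * (h / u ^ 2 * (u / (u ^ 2 - h ^ 2) * W)) * si) * (r * c) - (u * u1 / r * si - r * (h / u ^ 2 * (u / (u ^ 2 - h ^ 2) * W)) * c) * -(r * si)) = u ^ 2 := by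
  field_simp
  linear_combination (norm := ring1) (u^4*r^2*W^2*c^2 + u^4*r^2*W^2*si^2 + u^8*u1^2*c^4 - 2*u^6*u1^2*h^2*c^4 + 2*u^8*u1^2*c^2*si^2 - 4*u^6*u1^2*h^2*c^2*si^2 + u^4*u1^2*h^4*c^4 + 2*u^4*u1^2*h^4*c^2*si^2 + u^8*u1^2*si^4 - 2*u^6*u1^2*h^2*si^4 + u^4*u1^2*h^4*si^4 - u^8 + 2*u^6*h^2 - u^4*h^4 + u^6*W^2*c^2 - u^4*h^2*W^2*c^2 + u^6*W^2*si^2 - u^4*h^2*W^2*si^2) * hr2eq + (u^8*c^2 - 2*u^6*h^2*c^2 + u^4*h^4*c^2 + u^8*si^2 - 2*u^6*h^2*si^2 + u^4*h^4*si^2) * hW2eq + (u^10*u1^2*c^2 - 3*u^8*u1^2*h^2*c^2 + 3*u^6*u1^2*h^4*c^2 - u^4*u1^2*h^6*c^2 + u^10*u1^2*si^2 - 3*u^8*u1^2*h^2*si^2 + 3*u^6*u1^2*h^4*si^2 - u^4*u1^2*h^6*si^2 + u^10 - 3*u^8*h^2 + 3*u^6*h^4 - u^4*h^6) * hcs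

set_option maxHeartbeats 2000000 in
set_option maxRecDepth 4000 in
lemma bour_main (u u1 h r W c si r1 r2 l1 l2 t1 t2 : ℝ) (hu0 : u ≠ 0) (hr0 : r ≠ 0) (hW0 : W ≠ 0)
    (hUh0 : u^2 - h^2 ≠ 0) (hr2eq : r^2 = u^2 - h^2) (hW2eq : W^2 = u^2*(1-u1^2) - h^2)
    (hcs : si^2 + c^2 = 1)
    (hr1v : r1 = u * u1 / r)
    (hr2v : r2 = ((u1 * u1 + u * (-u * u1 ^ 4)) * r - u * u1 * r1) / r ^ 2)
    (hl1v : l1 = u / (u ^ 2 - h ^ 2) * W)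
    (hl2v : l2 = (u1 * (u ^ 2 - h ^ 2) - u * (2 * u * u1)) / (u ^ 2 - h ^ 2) ^ 2 * W
        + u / (u ^ 2 - h ^ 2) * ((2 * u * u1 * (1 - u1 ^ 2) - 2 * u ^ 2 * u1 * (-u * u1 ^ 4)) / (2 * W)))
    (ht1v : t1 = h / u ^ 2 * l1)
    (ht2v : t2 = -(h * (2 * u * u1)) / (u ^ 2) ^ 2 * l1 + h / u ^ 2 * l2) :
    ((((r2 - r * t1 ^ 2) * c + (2 * r1 * t1 + r * t2) * si) * ((u)⁻¹ * ((r1 * si - r * t1 * c) * h - (l1 - h * t1) * (r * c))) + ((r2 - r * t1 ^ 2) * si - (2 * r1 * t1 + r * t2) * c) * ((u)⁻¹ * ((l1 - h * t1) * -(r * si) - (r1 * c + r * t1 * si) * h)) + (l2 - h * t2) * ((u)⁻¹ * ((r1 * c + r * t1 * si) * (r * c) - (r1 * si - r * t1 * c) * -(r * si)))) * (-(r * c) * ((u)⁻¹ * ((r1 * si - r * t1 * c) * h - (l1 - h * t1) * (r * c))) + -(r * si) * ((u)⁻¹ * ((l1 - h * t1) * -(r * si) - (r1 * c + r * t1 *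 si) * h)) + 0 * ((u)⁻¹ * ((r1 * c + r * t1 * si) * (r * c) - (r1 * si - r * t1 * c) * -(r * si)))) - ((-(r1 * si) + r * t1 * c) * ((u)⁻¹ * ((r1 * si - r * t1 * c) * h - (l1 - h * t1) * (r * c))) + (r1 * c + r * t1 * si) * ((u)⁻¹ * ((l1 - h * t1) * -(r * si) - (r1 * c + r * t1 * si) * h)) + 0 * ((u)⁻¹ * ((r1 * c + r * t1 * si) * (r * c) - (r1 * si - r * t1 * c) * -(r * si)))) ^ 2) / (((r1 * c + r * t1 * si) * (r1 * c + r * t1 * si) + (r1 * si - r * t1 * c) * (r1 * si - r * t1 * c) + (l1 - h * t1) * (l1 - h * t1)) * (-(r * si) * -(r * si) + r * c * (r * c) + h * h) - ((r1 * c + r * t1 * si) * -(r * si) + (r1 * si - r * t1 * c) * (r * c) + (l1 - h * t1) * h) ^ 2) = ((u)⁻¹ * ((r1 * si - r * t1 * c) * h - (l1 - h * t1) * (r * c)) * 0 + (u)⁻¹ * ((l1 - h * t1) * -(r * si) - (r1 * c + r * t1 * si) * h) * 0 + (u)⁻¹ * ((r1 * c + r * t1 * si) * (r * c) - (r1 *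 si - r * t1 * c) * -(r * si)) * 1) ^ 4 := by
  have e1 : (((r2 - r * t1 ^ 2) * c + (2 * r1 * t1 + r * t2) * si) * ((u)⁻¹ * ((r1 * si - r * t1 * c) * h - (l1 - h * t1) * (r * c))) + ((r2 - r * t1 ^ 2) * si - (2 * r1 * t1 + r * t2) * c) * ((u)⁻¹ * ((l1 - h * t1) * -(r * si) - (r1 * c + r * t1 * si) * h)) + (l2 - h * t2) * ((u)⁻¹ * ((r1 * c + r * t1 * si) * (r * c) - (r1 * si - r * t1 * c) * -(r * si)))) = (u)⁻¹ * ((r2 - r*t1^2) * -(r*l1) + (2*r1*t1 + r*t2)*(h*r1) + (l2 - h*t2)*(r*r1)) := by linear_combination (-r*r2*l1*u⁻¹ + r*r1*l2*u⁻¹ + r^2*l1*t1^2*u⁻¹ + 2*h*r1^2*t1*u⁻¹) * hcs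
  have e2 : (-(r * c) * ((u)⁻¹ * ((r1 * si - r * t1 * c) * h - (l1 - h * t1) * (r * c))) + -(r * si) * ((u)⁻¹ * ((l1 - h * t1) * -(r * si) - (r1 * c + r * t1 * si) * h)) + 0 * ((u)⁻¹ * ((r1 * c + r * t1 * si) * (r * c) - (r1 * si - r * t1 * c) * -(r * si)))) = (u)⁻¹ * (r^2*l1) := by linear_combination (r^2*l1*u⁻¹) * hcs
  have e3 : ((-(r1 * si) + r * t1 * c) * ((u)⁻¹ * ((r1 * si - r * t1 * c) * h - (l1 - h * t1) * (r * c))) + (r1 * c + r * t1 * si) * ((u)⁻¹ * ((l1 - h * t1) * -(r * si) - (r1 * c + r * t1 * si) * h)) + 0 * ((u)⁻¹ * ((r1 * c + r * t1 * si) * (r * c) - (r1 * si - r * t1 * c) * -(r * si)))) = (u)⁻¹ * (-(h*r1^2) - r^2*t1*l1) := by linear_combination (-r^2*l1*t1*u⁻¹ - h*r1^2*u⁻¹) * hcs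
  have e5 : ((u)⁻¹ * ((r1 * si - r * t1 * c) * h - (l1 - h * t1) * (r * c)) * 0 + (u)⁻¹ * ((l1 - h * t1) * -(r * si) - (r1 * c + r * t1 * si) * h) * 0 + (u)⁻¹ * ((r1 * c + r * t1 * si) * (r * c) - (r1 * si - r * t1 * c) * -(r * si)) * 1) = (u)⁻¹ * (r*r1) := by linear_combination (r*r1*u⁻¹) * hcs
  have e4b : (r1^2 + r^2*t1^2 + (l1 - h*t1)^2) * (r^2 + h^2) - (-(r^2*t1) + h*(l1 - h*t1))^2 = u^2 := by
    rw [ht1v, hl1v, hr1v]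
    field_simp
    linear_combination (norm := ring1) (u^8*u1^2 - 2*u^6*u1^2*h^2 + u^4*u1^2*h^4 + u^4*r^2*W^2 - u^8 + 2*u^6*h^2 - u^4*h^4 + u^6*W^2 - u^4*h^2*W^2) * hr2eq + (u^8 - 2*u^6*h^2 + u^4*h^4) * hW2eq + (0) * hcs
  have e4 : (((r1 * c + r * t1 * si) * (r1 * c + r * t1 * si) + (r1 * si - r * t1 * c) * (r1 * si - r * t1 * c) + (l1 - h * t1) * (l1 - h * t1)) * (-(r * si) * -(r * si) + r * c * (r * c) + h * h) - ((r1 * c + r * t1 * si) * -(r * si) + (r1 * si - r * t1 * c) * (r * c) + (l1 - h * t1) * h) ^ 2) = u^2 := by linear_combination (r^2*l1^2 + r^2*r1^2 + r^2*si^2*r1^2 + r^2*c^2*r1^2 + h^2*r1^2) * hcs + e4b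
  rw [e1, e2, e3, e4, e5]
  rw [ht2v, ht1v, hl2v, hl1v, hr2v, hr1v]
  field_simp
  linear_combination (norm := ring1) (u^8*u1^4*r^4*W^2 - 2*u^6*u1^4*h^2*r^4*W^2 + u^4*u1^4*h^4*r^4*W^2 - 2*u^6*u1^2*r^4*W^2 + 2*u^4*u1^2*h^2*r^4*W^2 - u^8*u1^2*r^2*W^2 - u^4*u1^2*h^4*r^2*W^2 - 2*u^6*u1^2*h^2*r^4 + 2*u^6*u1^4*h^2*r^4 - 2*u^8*u1^6*h^2*r^4 + u^4*u1^2*h^4*r^4 - u^4*u1^4*h^4*r^4 + u^6*u1^6*h^4*r^4 + u^8*u1^2*r^4 - u^8*u1^4*r^4 + u^10*u1^6*r^4 - u^12*u1^4*r^2 + 4*u^10*u1^4*h^2*r^2 - 6*u^8*u1^4*h^4*r^2 + 4*u^6*u1^4*h^6*r^2 - u^4*u1^4*h^8*r^2 + u^10*u1^4*r^2*W^2 - 3*u^8*u1^4*h^2*r^2*W^2 + 3*u^6*u1^4*h^4*r^2*W^2 - u^4*u1^4*h^6*r^2*W^2 + 2*u^6*u1^2*h^2*r^2*W^2 - u^10*u1^2*W^2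 + 3*u^8*u1^2*h^2*W^2 - 3*u^6*u1^2*h^4*W^2 + u^4*u1^2*h^6*W^2 - 3*u^8*u1^2*h^2*r^2 + 3*u^6*u1^2*h^4*r^2 + 3*u^8*u1^4*h^2*r^2 - 3*u^6*u1^4*h^4*r^2 - 3*u^10*u1^6*h^2*r^2 + 3*u^8*u1^6*h^4*r^2 - u^4*u1^2*h^6*r^2 + u^4*u1^4*h^6*r^2 - u^6*u1^6*h^6*r^2 + u^10*u1^2*r^2 - u^10*u1^4*r^2 + u^12*u1^6*r^2 - u^14*u1^4 + 5*u^12*u1^4*h^2 - 10*u^10*u1^4*h^4 + 10*u^8*u1^4*h^6 - 5*u^6*u1^4*h^8 + u^4*u1^4*h^10 + u^12*u1^4*W^2 - 4*u^10*u1^4*h^2*W^2 + 6*u^8*u1^4*h^4*W^2 - 4*u^6*u1^4*h^6*W^2 + u^4*u1^4*h^8*W^2 - 4*u^10*u1^2*h^2 + 6*u^8*u1^2*h^4 - 4*u^6*u1^2*h^6 + 4*u^10*u1^4*h^2 - 6*u^8*u1^4*h^4 + 4*u^6*u1^4*h^6 - 4*u^12*u1^6*h^2 + 6*u^10*u1^6*h^4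 - 4*u^8*u1^6*h^6 + u^4*u1^2*h^8 - u^4*u1^4*h^8 + u^6*u1^6*h^8 + u^12*u1^2 - u^12*u1^4 + u^14*u1^6) * hr2eq + (-u^12*u1^2 + 4*u^10*u1^2*h^2 - 6*u^8*u1^2*h^4 + 4*u^6*u1^2*h^6 - u^4*u1^2*h^8 + u^14*u1^4 - 5*u^12*u1^4*h^2 + 10*u^10*u1^4*h^4 - 10*u^8*u1^4*h^6 + 5*u^6*u1^4*h^8 - u^4*u1^4*h^10) * hW2eq + (0) * hcs

/-- If the Bour function `U` satisfies the translator ODE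
`U'' = −U·(U')⁴`, then every member of the Bour family of isometric helicoidal surfaces of
pitch `h` built from `U` is again a `K^{1/4}`-translator: `K = n₃⁴` everywhere. -/
theorem bour_family_translator
    (I : Set ℝ) (hIopen : IsOpen I) (hIconn : I.OrdConnected)
    (U : ℝ → ℝ) (hUC : ContDiffOn ℝ 2 U I) (hUpos : ∀ s ∈ I, 0 < U s)
    (hODE : ∀ s ∈ I, deriv (deriv U) s = -(U s) * (deriv U s) ^ 4)
    (h : ℝ)
    (hUh : ∀ s ∈ I, 0 < (U s) ^ 2 - h ^ 2)
    (hpos : ∀ s ∈ I, 0 < (U s) ^ 2 * (1 - (deriv U s) ^ 2) - h ^ 2)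
    (Rh Λh Θh : ℝ → ℝ)
    (hRC : ContDiffOn ℝ 2 Rh I) (hΛC : ContDiffOn ℝ 2 Λh I) (hΘC : ContDiffOn ℝ 2 Θh I)
    (hR : ∀ s ∈ I, Rh s = Real.sqrt ((U s) ^ 2 - h ^ 2))
    (hΛ' : ∀ s ∈ I, deriv Λh s =
      (U s / ((U s) ^ 2 - h ^ 2)) *
        Real.sqrt ((U s) ^ 2 * (1 - (deriv U s) ^ 2) - h ^ 2))
    (hΘ' : ∀ s ∈ I, deriv Θh s = (h / (U s) ^ 2) * deriv Λh s)
    (X : ℝ → ℝ → ℝ × ℝ × ℝ)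
    (hX : ∀ s t, X s t =
      (Rh s * Real.cos (t - Θh s), Rh s * Real.sin (t - Θh s), Λh s + h * (t - Θh s))) :
    ∀ s ∈ I, ∀ t : ℝ, gauss X s t = (angleFun X s t) ^ 4 := by
  have hUd : ∀ x ∈ I, HasDerivAt U (deriv U x) x := fun x hx =>
    ((hUC.differentiableOn (by norm_num)).differentiableAt (hIopen.mem_nhds hx)).hasDerivAt
  have hU1d : ∀ x ∈ I, HasDerivAt (deriv U) (deriv (deriv U) x) x := fun x hx =>
    (((hUC.deriv_of_isOpen (m := 1) hIopen (by norm_num)).differentiableOn one_ne_zero).differentiableAt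
      (hIopen.mem_nhds hx)).hasDerivAt
  have hRd : ∀ x ∈ I, HasDerivAt Rh (deriv Rh x) x := fun x hx =>
    ((hRC.differentiableOn (by norm_num)).differentiableAt (hIopen.mem_nhds hx)).hasDerivAt
  have hΛd : ∀ x ∈ I, HasDerivAt Λh (deriv Λh x) x := fun x hx =>
    ((hΛC.differentiableOn (by norm_num)).differentiableAt (hIopen.mem_nhds hx)).hasDerivAt
  have hΘd : ∀ x ∈ I, HasDerivAt Θh (deriv Θh x) x := fun x hx =>
    ((hΘC.differentiableOn (by norm_num)).differentiableAt (hIopen.mem_nhds hx)).hasDerivAt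
  have hR1d : ∀ x ∈ I, HasDerivAt (deriv Rh) (deriv (deriv Rh) x) x := fun x hx =>
    (((hRC.deriv_of_isOpen (m := 1) hIopen (by norm_num)).differentiableOn one_ne_zero).differentiableAt
      (hIopen.mem_nhds hx)).hasDerivAt
  have hΛ1d : ∀ x ∈ I, HasDerivAt (deriv Λh) (deriv (deriv Λh) x) x := fun x hx =>
    (((hΛC.deriv_of_isOpen (m := 1) hIopen (by norm_num)).differentiableOn one_ne_zero).differentiableAt
      (hIopen.mem_nhds hx)).hasDerivAt
  have hΘ1d : ∀ x ∈ I, HasDerivAt (deriv Θh) (deriv (deriv Θh) x) x := fun x hx =>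
    (((hΘC.deriv_of_isOpen (m := 1) hIopen (by norm_num)).differentiableOn one_ne_zero).differentiableAt
      (hIopen.mem_nhds hx)).hasDerivAt
  -- first partial in s, on all of I
  have hpd1 : ∀ x ∈ I, ∀ τ : ℝ, pd1 X x τ =
      (deriv Rh x * Real.cos (τ - Θh x) + Rh x * deriv Θh x * Real.sin (τ - Θh x),
       deriv Rh x * Real.sin (τ - Θh x) - Rh x * deriv Θh x * Real.cos (τ - Θh x),
       deriv Λh x - h * deriv Θh x) := by
    intro x hx τ
    have e : (fun y => X y τ) = fun y =>
        ((Rh y * Real.cos (τ - Θh y), Rh y * Real.sin (τ - Θh y), Λh y + h * (τ - Θh y)) : ℝ × ℝ × ℝ) :=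
      funext fun y => hX y τ
    have hφ : HasDerivAt (fun y => τ - Θh y) (-deriv Θh x) x := by
      simpa using (hasDerivAt_const x τ).fun_sub (hΘd x hx)
    have hc : HasDerivAt (fun y => Real.cos (τ - Θh y))
        (-Real.sin (τ - Θh x) * (-deriv Θh x)) x :=
      ((Real.hasDerivAt_cos (τ - Θh x)).comp x hφ :)
    have hsn : HasDerivAt (fun y => Real.sin (τ - Θh y))
        (Real.cos (τ - Θh x) * (-deriv Θh x)) x :=
      ((Real.hasDerivAt_sin (τ - Θh x)).comp x hφ :)
    have h1 : HasDerivAt (fun y => Rh y * Real.cos (τ - Θh y))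
        (deriv Rh x * Real.cos (τ - Θh x) + Rh x * deriv Θh x * Real.sin (τ - Θh x)) x := by
      have := (hRd x hx).fun_mul hc
      exact this.congr_deriv (by ring)
    have h2 : HasDerivAt (fun y => Rh y * Real.sin (τ - Θh y))
        (deriv Rh x * Real.sin (τ - Θh x) - Rh x * deriv Θh x * Real.cos (τ - Θh x)) x := by
      have := (hRd x hx).fun_mul hsn
      exact this.congr_deriv (by ring)
    have h3 : HasDerivAt (fun y => Λh y + h * (τ - Θh y))
        (deriv Λh x - h * deriv Θh x) x := by
      have := (hΛd x hx).fun_add ((hasDerivAt_const x h).fun_mul hφ)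
      exact this.congr_deriv (by ring)
    show deriv (fun y => X y τ) x = _
    rw [e]
    exact (h1.prodMk (h2.prodMk h3)).deriv
  -- first partial in t, everywhere
  have hpd2 : ∀ x : ℝ, ∀ τ : ℝ, pd2 X x τ =
      (-(Rh x * Real.sin (τ - Θh x)), Rh x * Real.cos (τ - Θh x), h) := by
    intro x τ
    have e : (fun v => X x v) = fun v =>
        ((Rh x * Real.cos (v - Θh x), Rh x * Real.sin (v - Θh x), Λh x + h * (v - Θh x)) : ℝ × ℝ × ℝ) :=
      funext fun v => hX x v
    have hφ : HasDerivAt (fun v : ℝ => v - Θh x) 1 τ := by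
      simpa using (hasDerivAt_id τ).sub_const (Θh x)
    have hc : HasDerivAt (fun v => Real.cos (v - Θh x)) (-Real.sin (τ - Θh x) * 1) τ :=
      ((Real.hasDerivAt_cos (τ - Θh x)).comp τ hφ :)
    have hsn : HasDerivAt (fun v => Real.sin (v - Θh x)) (Real.cos (τ - Θh x) * 1) τ :=
      ((Real.hasDerivAt_sin (τ - Θh x)).comp τ hφ :)
    have h1 : HasDerivAt (fun v => Rh x * Real.cos (v - Θh x)) (-(Rh x * Real.sin (τ - Θh x))) τ := by
      have := hc.const_mul (Rh x); exact this.congr_deriv (by ring)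
    have h2 : HasDerivAt (fun v => Rh x * Real.sin (v - Θh x)) (Rh x * Real.cos (τ - Θh x)) τ := by
      have := hsn.const_mul (Rh x); exact this.congr_deriv (by ring)
    have h3 : HasDerivAt (fun v => Λh x + h * (v - Θh x)) h τ := by
      have := (hasDerivAt_const τ (Λh x)).fun_add (hφ.const_mul h)
      exact this.congr_deriv (by ring)
    show deriv (fun v => X x v) τ = _
    rw [e]
    exact (h1.prodMk (h2.prodMk h3)).deriv
  -- derivative of Rh on I
  have hR1 : ∀ x ∈ I, deriv Rh x = U x * deriv U x / Rh x := by
    intro x hx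
    have he : Rh =ᶠ[nhds x] fun y => Real.sqrt ((U y) ^ 2 - h ^ 2) := by
      filter_upwards [hIopen.mem_nhds hx] with y hy using hR y hy
    have hg : HasDerivAt (fun y => (U y) ^ 2 - h ^ 2) (2 * U x * deriv U x) x := by
      have := ((hUd x hx).fun_pow 2).sub_const (h ^ 2)
      exact this.congr_deriv (by ring)
    have hsq : HasDerivAt (fun y => Real.sqrt ((U y) ^ 2 - h ^ 2))
        (1 / (2 * Real.sqrt ((U x) ^ 2 - h ^ 2)) * (2 * U x * deriv U x)) x :=
      ((Real.hasDerivAt_sqrt (ne_of_gt (hUh x hx))).comp x hg :)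
    rw [he.deriv_eq, hsq.deriv, hR x hx]
    have h0 : Real.sqrt ((U x) ^ 2 - h ^ 2) ≠ 0 :=
      ne_of_gt (Real.sqrt_pos.mpr (hUh x hx))
    field_simp
  intro s hs t
  have hRs0 : 0 < Rh s := by
    rw [hR s hs]; exact Real.sqrt_pos.mpr (hUh s hs)
  -- second derivative of Rh at s
  have hR2 : deriv (deriv Rh) s =
      ((deriv U s * deriv U s + U s * deriv (deriv U) s) * Rh s
        - U s * deriv U s * deriv Rh s) / Rh s ^ 2 := by
    have he : deriv Rh =ᶠ[nhds s] fun y => U y * deriv U y / Rh y := by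
      filter_upwards [hIopen.mem_nhds hs] with y hy using hR1 y hy
    have hnum : HasDerivAt (fun y => U y * deriv U y)
        (deriv U s * deriv U s + U s * deriv (deriv U) s) s := (hUd s hs).fun_mul (hU1d s hs)
    have hdiv := hnum.fun_div (hRd s hs) (ne_of_gt hRs0)
    rw [he.deriv_eq, hdiv.deriv]
  -- second derivative of Λh at s
  have hΛ2 : deriv (deriv Λh) s =
      ((deriv U s * ((U s) ^ 2 - h ^ 2) - U s * (2 * U s * deriv U s)) / ((U s) ^ 2 - h ^ 2) ^ 2)
          * Real.sqrt ((U s) ^ 2 * (1 - (deriv U s) ^ 2) - h ^ 2)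
        + (U s / ((U s) ^ 2 - h ^ 2)) *
          ((2 * U s * deriv U s * (1 - (deriv U s) ^ 2) - 2 * (U s) ^ 2 * deriv U s * deriv (deriv U) s)
            / (2 * Real.sqrt ((U s) ^ 2 * (1 - (deriv U s) ^ 2) - h ^ 2))) := by
    have he : deriv Λh =ᶠ[nhds s] fun y =>
        (U y / ((U y) ^ 2 - h ^ 2)) *
          Real.sqrt ((U y) ^ 2 * (1 - (deriv U y) ^ 2) - h ^ 2) := by
      filter_upwards [hIopen.mem_nhds hs] with y hy using hΛ' y hy
    have hden : HasDerivAt (fun y => (U y) ^ 2 - h ^ 2) (2 * U s * deriv U s) s := by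
      have := ((hUd s hs).fun_pow 2).sub_const (h ^ 2)
      exact this.congr_deriv (by ring)
    have hf : HasDerivAt (fun y => U y / ((U y) ^ 2 - h ^ 2))
        ((deriv U s * ((U s) ^ 2 - h ^ 2) - U s * (2 * U s * deriv U s)) / ((U s) ^ 2 - h ^ 2) ^ 2) s :=
      (hUd s hs).fun_div hden (ne_of_gt (hUh s hs))
    have hq : HasDerivAt (fun y => (U y) ^ 2 * (1 - (deriv U y) ^ 2) - h ^ 2)
        (2 * U s * deriv U s * (1 - (deriv U s) ^ 2) - 2 * (U s) ^ 2 * deriv U s * deriv (deriv U) s) s := by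
      have := (((hUd s hs).fun_pow 2).fun_mul ((hasDerivAt_const s (1:ℝ)).fun_sub ((hU1d s hs).fun_pow 2))).sub_const (h ^ 2)
      exact this.congr_deriv (by ring)
    have hsq : HasDerivAt (fun y => Real.sqrt ((U y) ^ 2 * (1 - (deriv U y) ^ 2) - h ^ 2))
        (1 / (2 * Real.sqrt ((U s) ^ 2 * (1 - (deriv U s) ^ 2) - h ^ 2)) *
          (2 * U s * deriv U s * (1 - (deriv U s) ^ 2) - 2 * (U s) ^ 2 * deriv U s * deriv (deriv U) s)) s :=
      ((Real.hasDerivAt_sqrt (ne_of_gt (hpos s hs))).comp s hq :)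
    have hmul := hf.fun_mul hsq
    rw [he.deriv_eq, hmul.deriv]
    ring
  -- second derivative of Θh at s
  have hΘ2 : deriv (deriv Θh) s =
      (-(h * (2 * U s * deriv U s)) / ((U s) ^ 2) ^ 2) * deriv Λh s
        + (h / (U s) ^ 2) * deriv (deriv Λh) s := by
    have he : deriv Θh =ᶠ[nhds s] fun y => (h / (U y) ^ 2) * deriv Λh y := by
      filter_upwards [hIopen.mem_nhds hs] with y hy using hΘ' y hy
    have hden : HasDerivAt (fun y => (U y) ^ 2) (2 * U s * deriv U s) s := by
      have := (hUd s hs).fun_pow 2; exact this.congr_deriv (by ring)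
    have hf : HasDerivAt (fun y => h / (U y) ^ 2)
        ((0 * (U s) ^ 2 - h * (2 * U s * deriv U s)) / ((U s) ^ 2) ^ 2) s :=
      (hasDerivAt_const s h).fun_div hden (pow_ne_zero 2 (ne_of_gt (hUpos s hs)))
    have hmul := hf.fun_mul (hΛ1d s hs)
    rw [he.deriv_eq, hmul.deriv]
    ring
  -- second partials at (s, t)
  have hφ : HasDerivAt (fun y => t - Θh y) (-deriv Θh s) s := by
    simpa using (hasDerivAt_const s t).fun_sub (hΘd s hs)
  have hc : HasDerivAt (fun y => Real.cos (t - Θh y))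
      (-Real.sin (t - Θh s) * (-deriv Θh s)) s :=
    ((Real.hasDerivAt_cos (t - Θh s)).comp s hφ :)
  have hsn : HasDerivAt (fun y => Real.sin (t - Θh y))
      (Real.cos (t - Θh s) * (-deriv Θh s)) s :=
    ((Real.hasDerivAt_sin (t - Θh s)).comp s hφ :)
  have hXss : pd1 (pd1 X) s t =
      ((deriv (deriv Rh) s - Rh s * (deriv Θh s) ^ 2) * Real.cos (t - Θh s)
          + (2 * deriv Rh s * deriv Θh s + Rh s * deriv (deriv Θh) s) * Real.sin (t - Θh s),
       (deriv (deriv Rh) s - Rh s * (deriv Θh s) ^ 2) * Real.sin (t - Θh s)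
          - (2 * deriv Rh s * deriv Θh s + Rh s * deriv (deriv Θh) s) * Real.cos (t - Θh s),
       deriv (deriv Λh) s - h * deriv (deriv Θh) s) := by
    have he : (fun x => pd1 X x t) =ᶠ[nhds s] fun x =>
        ((deriv Rh x * Real.cos (t - Θh x) + Rh x * deriv Θh x * Real.sin (t - Θh x),
          deriv Rh x * Real.sin (t - Θh x) - Rh x * deriv Θh x * Real.cos (t - Θh x),
          deriv Λh x - h * deriv Θh x) : ℝ × ℝ × ℝ) := by
      filter_upwards [hIopen.mem_nhds hs] with x hx using hpd1 x hx t
    have h1 : HasDerivAt (fun x => deriv Rh x * Real.cos (t - Θh x) + Rh x * deriv Θh x * Real.sin (t - Θh x))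
        ((deriv (deriv Rh) s - Rh s * (deriv Θh s) ^ 2) * Real.cos (t - Θh s)
          + (2 * deriv Rh s * deriv Θh s + Rh s * deriv (deriv Θh) s) * Real.sin (t - Θh s)) s := by
      have := ((hR1d s hs).fun_mul hc).fun_add (((hRd s hs).fun_mul (hΘ1d s hs)).fun_mul hsn)
      exact this.congr_deriv (by ring)
    have h2 : HasDerivAt (fun x => deriv Rh x * Real.sin (t - Θh x) - Rh x * deriv Θh x * Real.cos (t - Θh x))
        ((deriv (deriv Rh) s - Rh s * (deriv Θh s) ^ 2) * Real.sin (t - Θh s)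
          - (2 * deriv Rh s * deriv Θh s + Rh s * deriv (deriv Θh) s) * Real.cos (t - Θh s)) s := by
      have := ((hR1d s hs).fun_mul hsn).fun_sub (((hRd s hs).fun_mul (hΘ1d s hs)).fun_mul hc)
      exact this.congr_deriv (by ring)
    have h3 : HasDerivAt (fun x => deriv Λh x - h * deriv Θh x)
        (deriv (deriv Λh) s - h * deriv (deriv Θh) s) s :=
      (hΛ1d s hs).fun_sub ((hΘ1d s hs).const_mul h)
    show deriv (fun x => pd1 X x t) s = _
    rw [he.deriv_eq]
    exact (h1.prodMk (h2.prodMk h3)).deriv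
  have hφt : HasDerivAt (fun τ : ℝ => τ - Θh s) 1 t := by
    simpa using (hasDerivAt_id t).sub_const (Θh s)
  have hct : HasDerivAt (fun τ => Real.cos (τ - Θh s)) (-Real.sin (t - Θh s) * 1) t :=
    ((Real.hasDerivAt_cos (t - Θh s)).comp t hφt :)
  have hst : HasDerivAt (fun τ => Real.sin (τ - Θh s)) (Real.cos (t - Θh s) * 1) t :=
    ((Real.hasDerivAt_sin (t - Θh s)).comp t hφt :)
  have hXst : pd2 (pd1 X) s t =
      (-(deriv Rh s * Real.sin (t - Θh s)) + Rh s * deriv Θh s * Real.cos (t - Θh s),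
       deriv Rh s * Real.cos (t - Θh s) + Rh s * deriv Θh s * Real.sin (t - Θh s),
       0) := by
    have e : (fun τ => pd1 X s τ) = fun τ =>
        ((deriv Rh s * Real.cos (τ - Θh s) + Rh s * deriv Θh s * Real.sin (τ - Θh s),
          deriv Rh s * Real.sin (τ - Θh s) - Rh s * deriv Θh s * Real.cos (τ - Θh s),
          deriv Λh s - h * deriv Θh s) : ℝ × ℝ × ℝ) :=
      funext fun τ => hpd1 s hs τ
    have h1 : HasDerivAt (fun τ => deriv Rh s * Real.cos (τ - Θh s) + Rh s * deriv Θh s * Real.sin (τ - Θh s))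
        (-(deriv Rh s * Real.sin (t - Θh s)) + Rh s * deriv Θh s * Real.cos (t - Θh s)) t := by
      have := (hct.const_mul (deriv Rh s)).fun_add (hst.const_mul (Rh s * deriv Θh s))
      exact this.congr_deriv (by ring)
    have h2 : HasDerivAt (fun τ => deriv Rh s * Real.sin (τ - Θh s) - Rh s * deriv Θh s * Real.cos (τ - Θh s))
        (deriv Rh s * Real.cos (t - Θh s) + Rh s * deriv Θh s * Real.sin (t - Θh s)) t := by
      have := (hst.const_mul (deriv Rh s)).fun_sub (hct.const_mul (Rh s * deriv Θh s))
      exact this.congr_deriv (by ring)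
    have h3 : HasDerivAt (fun _ : ℝ => deriv Λh s - h * deriv Θh s) 0 t := hasDerivAt_const _ _
    show deriv (fun τ => pd1 X s τ) t = _
    rw [e]
    exact (h1.prodMk (h2.prodMk h3)).deriv
  have hXtt : pd2 (pd2 X) s t =
      (-(Rh s * Real.cos (t - Θh s)), -(Rh s * Real.sin (t - Θh s)), 0) := by
    have e : (fun τ => pd2 X s τ) = fun τ =>
        ((-(Rh s * Real.sin (τ - Θh s)), Rh s * Real.cos (τ - Θh s), h) : ℝ × ℝ × ℝ) :=
      funext fun τ => hpd2 s τ
    have h1 : HasDerivAt (fun τ => -(Rh s * Real.sin (τ - Θh s))) (-(Rh s * Real.cos (t - Θh s))) t := by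
      have := (hst.const_mul (Rh s)).fun_neg
      exact this.congr_deriv (by ring)
    have h2 : HasDerivAt (fun τ => Rh s * Real.cos (τ - Θh s)) (-(Rh s * Real.sin (t - Θh s))) t := by
      have := hct.const_mul (Rh s)
      exact this.congr_deriv (by ring)
    have h3 : HasDerivAt (fun _ : ℝ => h) 0 t := hasDerivAt_const _ _
    show deriv (fun τ => pd2 X s τ) t = _
    rw [e]
    exact (h1.prodMk (h2.prodMk h3)).deriv
  -- final algebra
  have hu : 0 < U s := hUpos s hs
  have hu0 : U s ≠ 0 := ne_of_gt hu
  have hr0 : Rh s ≠ 0 := ne_of_gt hRs0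
  have hWpos : 0 < Real.sqrt ((U s) ^ 2 * (1 - (deriv U s) ^ 2) - h ^ 2) :=
    Real.sqrt_pos.mpr (hpos s hs)
  have hW0 : Real.sqrt ((U s) ^ 2 * (1 - (deriv U s) ^ 2) - h ^ 2) ≠ 0 := ne_of_gt hWpos
  have hUh0 : (U s) ^ 2 - h ^ 2 ≠ 0 := ne_of_gt (hUh s hs)
  have hr2eq : Rh s ^ 2 = (U s) ^ 2 - h ^ 2 := by
    rw [hR s hs]; exact Real.sq_sqrt (le_of_lt (hUh s hs))
  have hW2eq : (Real.sqrt ((U s) ^ 2 * (1 - (deriv U s) ^ 2) - h ^ 2)) ^ 2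
      = (U s) ^ 2 * (1 - (deriv U s) ^ 2) - h ^ 2 := Real.sq_sqrt (le_of_lt (hpos s hs))
  have hcs : Real.sin (t - Θh s) ^ 2 + Real.cos (t - Θh s) ^ 2 = 1 := Real.sin_sq_add_cos_sq _
  have hNN : dot3
      (cross3
        (deriv Rh s * Real.cos (t - Θh s) + Rh s * deriv Θh s * Real.sin (t - Θh s),
         deriv Rh s * Real.sin (t - Θh s) - Rh s * deriv Θh s * Real.cos (t - Θh s),
         deriv Λh s - h * deriv Θh s)
        (-(Rh s * Real.sin (t - Θh s)), Rh s * Real.cos (t - Θh s), h))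
      (cross3
        (deriv Rh s * Real.cos (t - Θh s) + Rh s * deriv Θh s * Real.sin (t - Θh s),
         deriv Rh s * Real.sin (t - Θh s) - Rh s * deriv Θh s * Real.cos (t - Θh s),
         deriv Λh s - h * deriv Θh s)
        (-(Rh s * Real.sin (t - Θh s)), Rh s * Real.cos (t - Θh s), h))
      = (U s) ^ 2 := by
    simp only [dot3, cross3]
    rw [hΘ' s hs, hΛ' s hs, hR1 s hs]
    linear_combination (norm := ring1) bour_NN (U s) (deriv U s) h (Rh s)
      (Real.sqrt ((U s) ^ 2 * (1 - (deriv U s) ^ 2) - h ^ 2))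
      (Real.cos (t - Θh s)) (Real.sin (t - Θh s)) hu0 hr0 hW0 hUh0 hr2eq hW2eq hcs
  simp only [gauss, angleFun, unitNormal]
  rw [hXss, hXst, hXtt, hpd1 s hs t, hpd2 s t, hNN, Real.sqrt_sq hu.le]
  simp only [dot3, cross3, e3, Prod.smul_mk, smul_eq_mul]
  have hr2v : deriv (deriv Rh) s =
      ((deriv U s * deriv U s + U s * (-U s * deriv U s ^ 4)) * Rh s
        - U s * deriv U s * deriv Rh s) / Rh s ^ 2 := by
    rw [hR2, hODE s hs]
  have hl2v : deriv (deriv Λh) s =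
      (deriv U s * (U s ^ 2 - h ^ 2) - U s * (2 * U s * deriv U s)) / (U s ^ 2 - h ^ 2) ^ 2
          * Real.sqrt (U s ^ 2 * (1 - deriv U s ^ 2) - h ^ 2)
        + U s / (U s ^ 2 - h ^ 2) *
          ((2 * U s * deriv U s * (1 - deriv U s ^ 2)
              - 2 * U s ^ 2 * deriv U s * (-U s * deriv U s ^ 4))
            / (2 * Real.sqrt (U s ^ 2 * (1 - deriv U s ^ 2) - h ^ 2))) := by
    rw [hΛ2, hODE s hs]
  linear_combination (norm := ring1) bour_main (U s) (deriv U s) h (Rh s)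
    (Real.sqrt ((U s) ^ 2 * (1 - (deriv U s) ^ 2) - h ^ 2))
    (Real.cos (t - Θh s)) (Real.sin (t - Θh s))
    (deriv Rh s) (deriv (deriv Rh) s) (deriv Λh s) (deriv (deriv Λh) s)
    (deriv Θh s) (deriv (deriv Θh) s)
    hu0 hr0 hW0 hUh0 hr2eq hW2eq hcs (hR1 s hs) hr2v (hΛ' s hs) hl2v (hΘ' s hs) hΘ2
end
end
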